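/- arXiv:2111.15383 — 6 statements merged into one kernel-verified Lean document; each statement's English description precedes it below -/
import Mathlib

section
/- Let d ≥ 3 be an integer, a_c = (d−2)/2, and let (a,b) ∈ ℝ² satisfy a ≤ b < a+1 and a < a_c. Set p = 2d/(d−2+2(b−a)), n = d/(1+a−b) and α = (a_c−a)(a+1−b)/(a_c−a+b). Assume 0 < α ≤ 1 and set Z = 2^n ∫_{ℝ^d} |x|^{−bp}(1+|x|^{2α})^{−n} dx. Define w(x) = ((1+|x|^{2α})/2)^{−(n−2)/2} for x ≠ 0. Then the integrals ∫_{ℝ^d} w(x)^p |x|^{−bp} dx and ∫_{ℝ^d} |∇w(x)|² |x|^{−2a} dx are finite and equality holds in the optimal Caffarelli–Kohn–Nirenberg inequality: (∫_{ℝ^d} w(x)^p |x|^{−bp} dx)^{2/p} = (4/(n(n−2)α² Z^{2/n})) ∫_{ℝ^d} |∇w(x)|² |x|^{−2a} dx. -/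
open MeasureTheory Real Set Filter Metric

section CknAux

/-- Integrability of `u ^ (s-1) * (1+u) ^ (-m)` on `(0, ∞)` for `0 < s < m`. -/
lemma ckn_onedim_integrable {s m : ℝ} (hs : 0 < s) (hsm : s < m) :
    IntegrableOn (fun u : ℝ => u ^ (s - 1) * (1 + u) ^ (-m)) (Ioi 0) := by
  have hm0 : 0 < m := hs.trans hsm
  have hmeas : Measurable (fun u : ℝ => u ^ (s - 1) * (1 + u) ^ (-m)) :=
    (measurable_id.pow_const _).mul ((measurable_const.add measurable_id).pow_const _)
  have : Ioi (0:ℝ) = Ioc (0:ℝ) 1 ∪ Ioi 1 := (Ioc_union_Ioi_eq_Ioi zero_le_one).symm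
  rw [this]
  apply IntegrableOn.union
  · apply Integrable.mono' (g := fun u : ℝ => u ^ (s - 1))
    · have h1 : IntervalIntegrable (fun u : ℝ => u ^ (s-1)) volume 0 1 :=
        intervalIntegral.intervalIntegrable_rpow' (by linarith)
      rw [intervalIntegrable_iff_integrableOn_Ioc_of_le zero_le_one] at h1
      exact h1
    · exact hmeas.aestronglyMeasurable.restrict
    · filter_upwards [ae_restrict_mem measurableSet_Ioc] with u hu
      have hu0 : 0 < u := hu.1
      rw [norm_mul, norm_of_nonneg (rpow_nonneg hu0.le _),
        norm_of_nonneg (rpow_nonneg (by linarith) _)]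
      have h2 : (1 + u) ^ (-m) ≤ 1 :=
        rpow_le_one_of_one_le_of_nonpos (by linarith) (by linarith)
      nlinarith [rpow_nonneg hu0.le (s-1), rpow_nonneg (show (0:ℝ) ≤ 1 + u by linarith) (-m)]
  · apply Integrable.mono' (g := fun u : ℝ => u ^ (s - 1 - m))
    · exact integrableOn_Ioi_rpow_of_lt (by linarith) one_pos
    · exact hmeas.aestronglyMeasurable.restrict
    · filter_upwards [ae_restrict_mem measurableSet_Ioi] with u hu
      have hu1 : (1:ℝ) < u := hu
      have hu0 : (0:ℝ) < u := by linarith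
      rw [norm_mul, norm_of_nonneg (rpow_nonneg hu0.le _),
        norm_of_nonneg (rpow_nonneg (by linarith) _)]
      have h2 : (1 + u) ^ (-m) ≤ u ^ (-m) :=
        rpow_le_rpow_of_nonpos hu0 (by linarith) (by linarith)
      calc u ^ (s-1) * (1+u) ^ (-m) ≤ u ^ (s-1) * u ^ (-m) := by
            exact mul_le_mul_of_nonneg_left h2 (rpow_nonneg hu0.le _)
        _ = u ^ (s-1-m) := by rw [← rpow_add hu0]; ring_nf

lemma ckn_onedim_pos {s m : ℝ}
    (hi : IntegrableOn (fun u : ℝ => u ^ (s - 1) * (1 + u) ^ (-m)) (Ioi 0)) :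
    0 < ∫ u in Ioi (0:ℝ), u ^ (s - 1) * (1 + u) ^ (-m) := by
  rw [setIntegral_pos_iff_support_of_nonneg_ae ?_ hi]
  · refine lt_of_lt_of_le ?_ (measure_mono (show Ioi (0:ℝ) ⊆ _ from ?_))
    · rw [Real.volume_Ioi]; exact ENNReal.zero_lt_top
    · intro u hu
      refine ⟨?_, hu⟩
      have hu0 : (0:ℝ) < u := hu
      have : 0 < u ^ (s-1) * (1+u) ^ (-m) := by positivity
      exact Function.mem_support.2 this.ne'
  · filter_upwards [ae_restrict_mem measurableSet_Ioi] with u hu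
    have hu0 : (0:ℝ) < u := hu
    positivity

/-- The integration-by-parts identity between the two Beta-type integrals. -/
lemma ckn_onedim_ibp {n : ℝ} (hn : 2 < n) :
    ∫ u in Ioi (0:ℝ), u ^ (n/2 + 1 - 1) * (1 + u) ^ (-n) =
      n / (n - 2) * ∫ u in Ioi (0:ℝ), u ^ (n/2 - 1) * (1 + u) ^ (-n) := by
  set F : ℝ → ℝ := fun u => u ^ (n/2) * (1 + u) ^ (-(n-1)) with hF
  set F' : ℝ → ℝ := fun u =>
    (n/2) * (u ^ (n/2 - 1) * (1 + u) ^ (-(n-1) )) - (n-1) * (u ^ (n/2 + 1 - 1) * (1 + u) ^ (-n))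
    with hF'
  have hig1 : IntegrableOn (fun u : ℝ => u ^ (n/2 - 1) * (1 + u) ^ (-(n-1))) (Ioi 0) :=
    ckn_onedim_integrable (by linarith) (by linarith)
  have hig2 : IntegrableOn (fun u : ℝ => u ^ (n/2 + 1 - 1) * (1 + u) ^ (-n)) (Ioi 0) :=
    ckn_onedim_integrable (by linarith) (by linarith)
  have hig3 : IntegrableOn (fun u : ℝ => u ^ (n/2 - 1) * (1 + u) ^ (-n)) (Ioi 0) :=
    ckn_onedim_integrable (by linarith) (by linarith)
  have hderiv : ∀ u ∈ Ioi (0:ℝ), HasDerivAt F (F' u) u := by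
    intro u hu
    have hu0 : (0:ℝ) < u := hu
    have h1 : HasDerivAt (fun t : ℝ => t ^ (n/2)) ((n/2) * u ^ (n/2 - 1)) u :=
      Real.hasDerivAt_rpow_const (Or.inl hu0.ne')
    have h2 : HasDerivAt (fun t : ℝ => (1 + t) ^ (-(n-1))) ((-(n-1)) * (1+u) ^ (-n)) u := by
      have hb : HasDerivAt (fun t : ℝ => 1 + t) 1 u := (hasDerivAt_id u).const_add 1
      have h3 : HasDerivAt (fun y : ℝ => y ^ (-(n-1))) ((-(n-1)) * (1+u) ^ (-(n-1) - 1)) (1+u) :=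
        Real.hasDerivAt_rpow_const (Or.inl (by positivity))
      have := h3.comp u hb
      simpa [Function.comp_def, show -(n-1) - 1 = -n by ring] using this
    have : HasDerivAt (fun t => t ^ (n/2) * (1 + t) ^ (-(n-1))) _ u := h1.mul h2
    convert this using 1
    simp only [hF']
    ring
  have hcont : ContinuousWithinAt F (Ici 0) 0 := by
    apply ContinuousAt.continuousWithinAt
    apply ContinuousAt.mul
    · exact Real.continuousAt_rpow_const _ _ (Or.inr (by linarith))
    · exact ((continuous_const.add continuous_id).continuousAt).rpow_const
        (Or.inl (by norm_num))
  have htend : Tendsto F atTop (nhds 0) := by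
    have hbound : ∀ᶠ u in atTop, F u ≤ u ^ (-(n/2 - 1)) := by
      filter_upwards [eventually_ge_atTop (1:ℝ)] with u hu
      have hu0 : (0:ℝ) < u := by linarith
      have h2 : (1 + u) ^ (-(n-1)) ≤ u ^ (-(n-1)) :=
        rpow_le_rpow_of_nonpos hu0 (by linarith) (by linarith)
      calc F u ≤ u ^ (n/2) * u ^ (-(n-1)) :=
            mul_le_mul_of_nonneg_left h2 (rpow_nonneg hu0.le _)
        _ = u ^ (-(n/2 - 1)) := by rw [← rpow_add hu0]; ring_nf
    have hlow : ∀ᶠ u in atTop, (0:ℝ) ≤ F u := by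
      filter_upwards [eventually_ge_atTop (0:ℝ)] with u hu
      have : (0:ℝ) ≤ 1 + u := by linarith
      exact mul_nonneg (rpow_nonneg hu _) (rpow_nonneg this _)
    exact tendsto_of_tendsto_of_tendsto_of_le_of_le' tendsto_const_nhds
      (tendsto_rpow_neg_atTop (by linarith)) hlow hbound
  have hF'int : IntegrableOn F' (Ioi 0) := by
    apply Integrable.sub
    · exact hig1.const_mul _
    · exact hig2.const_mul _
  have hkey : ∫ u in Ioi (0:ℝ), F' u = 0 - F 0 :=
    integral_Ioi_of_hasDerivAt_of_tendsto hcont hderiv hF'int htend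
  have hF0 : F 0 = 0 := by
    simp only [hF]
    rw [Real.zero_rpow (by positivity)]
    ring
  rw [hF0, sub_zero] at hkey
  have hsplit : ∫ u in Ioi (0:ℝ), u ^ (n/2 - 1) * (1 + u) ^ (-(n-1)) =
      (∫ u in Ioi (0:ℝ), u ^ (n/2 - 1) * (1 + u) ^ (-n)) +
      ∫ u in Ioi (0:ℝ), u ^ (n/2 + 1 - 1) * (1 + u) ^ (-n) := by
    rw [← integral_add hig3 hig2]
    apply setIntegral_congr_fun measurableSet_Ioi
    intro u hu
    dsimp only
    have hu0 : (0:ℝ) < u := hu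
    have h1u : (0:ℝ) < 1 + u := by linarith
    have e1 : (1 + u) ^ (-(n-1)) = (1+u) ^ (-n) * (1+u) := by
      rw [← Real.rpow_add_one h1u.ne']
      ring_nf
    have e2 : u ^ (n/2 + 1 - 1) = u ^ (n/2 - 1) * u := by
      rw [← Real.rpow_add_one hu0.ne']
      ring_nf
    rw [e1, e2]
    ring
  have hlin : ∫ u in Ioi (0:ℝ), F' u =
      (n/2) * (∫ u in Ioi (0:ℝ), u ^ (n/2 - 1) * (1 + u) ^ (-(n-1))) -
      (n-1) * ∫ u in Ioi (0:ℝ), u ^ (n/2 + 1 - 1) * (1 + u) ^ (-n) := by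
    simp only [hF']
    rw [integral_sub (hig1.const_mul _) (hig2.const_mul _),
      integral_const_mul, integral_const_mul]
  rw [hlin, hsplit] at hkey
  have hn2 : n - 2 ≠ 0 := by linarith
  rw [div_mul_eq_mul_div, eq_div_iff hn2]
  linarith [hkey]

variable {d : ℕ}

lemma ckn_eucl_nontrivial (hd : 0 < d) : Nontrivial (EuclideanSpace ℝ (Fin d)) := by
  have : Nonempty (Fin d) := ⟨⟨0, hd⟩⟩
  exact ⟨EuclideanSpace.single ⟨0, hd⟩ 1, 0, by
    intro h
    have := congrArg (fun v : EuclideanSpace ℝ (Fin d) => v ⟨0, hd⟩) h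
    simp [EuclideanSpace.single_apply] at this⟩

lemma ckn_radial_lintegral (hd : 0 < d) (g : ℝ → ENNReal) (hg : Measurable g) :
    ∫⁻ x : EuclideanSpace ℝ (Fin d), g ‖x‖ =
      (volume.toSphere : Measure (sphere (0 : EuclideanSpace ℝ (Fin d)) 1)) univ *
        ∫⁻ r in Ioi (0:ℝ), ENNReal.ofReal (r ^ (d - 1)) * g r := by
  haveI := ckn_eucl_nontrivial hd
  set E := EuclideanSpace ℝ (Fin d)
  have hdim : Module.finrank ℝ E = d := finrank_euclideanSpace_fin
  have h1 : ∫⁻ x : E, g ‖x‖ = ∫⁻ x in ({(0:E)}ᶜ : Set E), g ‖x‖ := by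
    rw [restrict_compl_singleton]
  have h2 : ∫⁻ x in ({(0:E)}ᶜ : Set E), g ‖x‖ ∂(volume : Measure E) =
      ∫⁻ x : ({(0:E)}ᶜ : Set E), g ‖x.1‖ ∂((volume : Measure E).comap Subtype.val) :=
    (lintegral_subtype_comap (measurableSet_singleton (0:E)).compl _).symm
  have h3 : ∫⁻ x : ({(0:E)}ᶜ : Set E), g ‖x.1‖ ∂((volume : Measure E).comap Subtype.val) =
      ∫⁻ p : sphere (0:E) 1 × Ioi (0:ℝ), g p.2.1
        ∂((volume : Measure E).toSphere.prod (.volumeIoiPow (Module.finrank ℝ E - 1))) := by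
    rw [← (volume : Measure E).measurePreserving_homeomorphUnitSphereProd.lintegral_comp
      (f := fun p : sphere (0:E) 1 × Ioi (0:ℝ) => g p.2.1)
      (hg.comp (measurable_subtype_coe.comp measurable_snd))]
    simp [homeomorphUnitSphereProd]
  have h4 : ∫⁻ p : sphere (0:E) 1 × Ioi (0:ℝ), g p.2.1
        ∂((volume : Measure E).toSphere.prod (.volumeIoiPow (Module.finrank ℝ E - 1))) =
      (volume : Measure E).toSphere univ *
        ∫⁻ r : Ioi (0:ℝ), g r.1 ∂(Measure.volumeIoiPow (Module.finrank ℝ E - 1)) := by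
    rw [lintegral_prod (fun p : sphere (0:E) 1 × Ioi (0:ℝ) => g p.2.1)
      ((hg.comp (measurable_subtype_coe.comp measurable_snd)).aemeasurable)]
    simp [lintegral_const, mul_comm]
  have h5 : ∫⁻ r : Ioi (0:ℝ), g r.1 ∂(Measure.volumeIoiPow (Module.finrank ℝ E - 1)) =
      ∫⁻ r in Ioi (0:ℝ), ENNReal.ofReal (r ^ (d - 1)) * g r := by
    rw [Measure.volumeIoiPow, lintegral_withDensity_eq_lintegral_mul
      (Measure.comap Subtype.val volume)
      (f := fun r : Ioi (0:ℝ) => ENNReal.ofReal (r.1 ^ (Module.finrank ℝ E - 1)))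
      ((measurable_subtype_coe.pow_const _).ennreal_ofReal)
      (g := fun r : Ioi (0:ℝ) => g r.1) (hg.comp measurable_subtype_coe)]
    rw [hdim]
    have h6 := lintegral_subtype_comap (μ := (volume : Measure ℝ))
      (measurableSet_Ioi (a := (0:ℝ)))
      (fun r => ENNReal.ofReal (r ^ (d-1)) * g r)
    rw [← h6]
    rfl
  rw [h1, h2, h3, h4, h5]

lemma ckn_radial_integrable (hd : 0 < d) (f : ℝ → ℝ) (hm : Measurable f)
    (hnn : ∀ r : ℝ, 0 ≤ r → 0 ≤ f r)
    (hi : IntegrableOn (fun r : ℝ => r ^ (d - 1) * f r) (Ioi 0)) :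
    Integrable (fun x : EuclideanSpace ℝ (Fin d) => f ‖x‖) := by
  haveI := ckn_eucl_nontrivial hd
  refine ⟨(hm.comp measurable_norm).aestronglyMeasurable, ?_⟩
  rw [hasFiniteIntegral_iff_ofReal (Eventually.of_forall fun x => hnn _ (norm_nonneg x))]
  have hkey := ckn_radial_lintegral hd (fun r => ENNReal.ofReal (f r)) hm.ennreal_ofReal
  rw [hkey]
  apply ENNReal.mul_lt_top (measure_lt_top _ _)
  have : ∫⁻ r in Ioi (0:ℝ), ENNReal.ofReal (r ^ (d - 1)) * ENNReal.ofReal (f r) =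
      ∫⁻ r in Ioi (0:ℝ), ENNReal.ofReal (r ^ (d-1) * f r) := by
    apply setLIntegral_congr_fun measurableSet_Ioi
    exact fun r hr =>
      (ENNReal.ofReal_mul (pow_nonneg (le_of_lt hr) _)).symm
  rw [this]
  exact hi.lintegral_lt_top

lemma ckn_radial_integral (hd : 0 < d) (f : ℝ → ℝ) :
    ∫ x : EuclideanSpace ℝ (Fin d), f ‖x‖ =
      (d : ℝ) * (volume (ball (0 : EuclideanSpace ℝ (Fin d)) 1)).toReal *
        ∫ r in Ioi (0:ℝ), r ^ (d - 1) * f r := by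
  haveI := ckn_eucl_nontrivial hd
  have := integral_fun_norm_addHaar (volume : Measure (EuclideanSpace ℝ (Fin d))) f
  rw [finrank_euclideanSpace_fin] at this
  rw [this]
  simp only [nsmul_eq_mul, smul_eq_mul, mul_assoc]
  rfl

lemma ckn_subst_eqOn {β c m : ℝ} (hβ : 0 < β) :
    EqOn (fun r : ℝ => (|β| * r ^ (β - 1)) • ((r^β) ^ (c-1) * (1 + r^β) ^ (-m)))
      (fun r : ℝ => β * (r ^ (β*c - 1) * (1 + r^β) ^ (-m))) (Ioi 0) := by
  intro r hr
  have hr0 : (0:ℝ) < r := hr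
  dsimp only
  have key : r ^ (β-1) * r ^ (β*(c-1)) = r ^ (β*c-1) := by
    rw [← Real.rpow_add hr0]; ring_nf
  rw [abs_of_pos hβ, smul_eq_mul, ← Real.rpow_mul hr0.le β (c-1)]
  linear_combination (β * (1 + r^β) ^ (-m)) * key

lemma ckn_subst_integrableOn {β c m : ℝ} (hβ : 0 < β) :
    IntegrableOn (fun r : ℝ => r ^ (β*c - 1) * (1 + r^β) ^ (-m)) (Ioi 0) ↔
      IntegrableOn (fun u : ℝ => u ^ (c - 1) * (1 + u) ^ (-m)) (Ioi 0) := by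
  rw [← integrableOn_Ioi_comp_rpow_iff (fun u : ℝ => u ^ (c-1) * (1+u) ^ (-m)) hβ.ne']
  rw [integrableOn_congr_fun (ckn_subst_eqOn hβ) measurableSet_Ioi]
  exact (integrable_const_mul_iff (isUnit_iff_ne_zero.2 hβ.ne') _).symm

lemma ckn_subst_integral {β c m : ℝ} (hβ : 0 < β) :
    ∫ r in Ioi (0:ℝ), r ^ (β*c - 1) * (1 + r^β) ^ (-m) =
      β⁻¹ * ∫ u in Ioi (0:ℝ), u ^ (c - 1) * (1 + u) ^ (-m) := by
  rw [← integral_comp_rpow_Ioi (fun u : ℝ => u ^ (c-1) * (1+u) ^ (-m)) hβ.ne']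
  rw [setIntegral_congr_fun measurableSet_Ioi (ckn_subst_eqOn hβ)]
  rw [integral_const_mul, ← mul_assoc, inv_mul_cancel₀ hβ.ne', one_mul]

lemma ckn_norm_fderiv_w {n α : ℝ} (hn : 2 < n) (hα : 0 < α)
    (w : EuclideanSpace ℝ (Fin d) → ℝ)
    (hw : ∀ x, w x = ((1 + ‖x‖ ^ (2*α)) / 2) ^ (-((n-2)/2)))
    (x : EuclideanSpace ℝ (Fin d)) (hx : x ≠ 0) :
    ‖fderiv ℝ w x‖ =
      ((n-2)/2 * (((1 + ‖x‖^(2*α))/2) ^ (-((n-2)/2) - 1)) * (α * ‖x‖^(2*α-2)/2)) * (2*‖x‖) := by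
  have hr0 : (0:ℝ) < ‖x‖ := norm_pos_iff.2 hx
  set φ : ℝ → ℝ := fun t => ((1 + t^α)/2) ^ (-((n-2)/2)) with hφdef
  set s : ℝ := ‖x‖ ^ (2:ℝ) with hs
  have hs0 : (0:ℝ) < s := rpow_pos_of_pos hr0 _
  have hsα : s ^ α = ‖x‖ ^ (2*α) := by
    rw [hs, ← Real.rpow_mul (norm_nonneg x)]
  have hsα1 : s ^ (α - 1) = ‖x‖ ^ (2*α - 2) := by
    rw [hs, ← Real.rpow_mul (norm_nonneg x)]
    ring_nf
  have hB0 : (0:ℝ) < (1 + s^α)/2 := by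
    have := rpow_pos_of_pos hs0 α
    positivity
  have hsq : HasFDerivAt (fun y : EuclideanSpace ℝ (Fin d) => ‖y‖ ^ (2:ℝ))
      (((2:ℝ) * ‖x‖ ^ ((2:ℝ)-2)) • innerSL ℝ x) x := hasFDerivAt_norm_rpow x one_lt_two
  have hin : HasDerivAt (fun t : ℝ => (1 + t^α)/2) (α * s^(α-1)/2) s :=
    ((Real.hasDerivAt_rpow_const (Or.inl hs0.ne')).const_add 1).div_const 2
  have hφ : HasDerivAt φ
      ((-((n-2)/2)) * ((1 + s^α)/2) ^ (-((n-2)/2) - 1) * (α * s^(α-1)/2)) s := by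
    have h := hin.rpow_const (p := -((n-2)/2)) (Or.inl hB0.ne')
    convert h using 1
    ring
  have hwf : w = fun y => φ (‖y‖ ^ (2:ℝ)) := by
    funext y
    rw [hw y, hφdef]
    dsimp only
    rw [← Real.rpow_mul (norm_nonneg y)]
  have hD : HasFDerivAt w
      (((-((n-2)/2)) * ((1 + s^α)/2) ^ (-((n-2)/2) - 1) * (α * s^(α-1)/2)) •
        (((2:ℝ) * ‖x‖ ^ ((2:ℝ)-2)) • innerSL ℝ x)) x := by
    rw [hwf]
    exact hφ.comp_hasFDerivAt x hsq
  rw [hD.fderiv, norm_smul, norm_smul, innerSL_apply_norm]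
  have h20 : ‖x‖ ^ ((2:ℝ)-2) = 1 := by
    norm_num
  rw [h20, hsα, hsα1]
  rw [Real.norm_eq_abs, Real.norm_eq_abs]
  have hBpos : (0:ℝ) < (1 + ‖x‖^(2*α))/2 := by
    have := rpow_pos_of_pos hr0 (2*α)
    positivity
  have habs : |(-((n-2)/2)) * ((1 + ‖x‖^(2*α))/2) ^ (-((n-2)/2) - 1) * (α * ‖x‖^(2*α-2)/2)| =
      (n-2)/2 * (((1 + ‖x‖^(2*α))/2) ^ (-((n-2)/2) - 1)) * (α * ‖x‖^(2*α-2)/2) := by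
    rw [abs_mul, abs_mul]
    rw [abs_of_nonpos (by linarith : -((n-2)/2) ≤ 0),
      abs_of_nonneg (le_of_lt (rpow_pos_of_pos hBpos _)),
      abs_of_nonneg (by positivity : (0:ℝ) ≤ α * ‖x‖^(2*α-2)/2)]
    ring
  rw [habs]
  rw [abs_of_nonneg (by norm_num : (0:ℝ) ≤ 2 * 1)]
  ring

end CknAux

set_option maxHeartbeats 1000000 in
/-- The function w(x) = ((1+|x|^{2α})/2)^{-(n-2)/2} is extremal for the optimal
Caffarelli-Kohn-Nirenberg inequality when 0 < α ≤ 1. -/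
theorem ckn_extremal (d : ℕ) (hd : 3 ≤ d) (a b p n α Z : ℝ)
    (hab : a ≤ b) (hba : b < a + 1) (ha : a < ((d : ℝ) - 2) / 2)
    (hp : p = 2 * d / ((d : ℝ) - 2 + 2 * (b - a)))
    (hn : n = (d : ℝ) / (1 + a - b))
    (hα : α = (((d : ℝ) - 2) / 2 - a) * (a + 1 - b) / (((d : ℝ) - 2) / 2 - a + b))
    (hα0 : 0 < α) (hα1 : α ≤ 1)
    (hZ : Z = (2 : ℝ) ^ n * ∫ x : EuclideanSpace ℝ (Fin d),
        ‖x‖ ^ (-(b * p)) * (1 + ‖x‖ ^ (2 * α)) ^ (-n))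
    (w : EuclideanSpace ℝ (Fin d) → ℝ)
    (hw : ∀ x, w x = ((1 + ‖x‖ ^ (2 * α)) / 2) ^ (-((n - 2) / 2))) :
    Integrable (fun x : EuclideanSpace ℝ (Fin d) => w x ^ p * ‖x‖ ^ (-(b * p))) ∧
    Integrable (fun x : EuclideanSpace ℝ (Fin d) =>
        ‖fderiv ℝ w x‖ ^ 2 * ‖x‖ ^ (-(2 * a))) ∧
    (∫ x : EuclideanSpace ℝ (Fin d), w x ^ p * ‖x‖ ^ (-(b * p))) ^ (2 / p) =
      4 / (n * (n - 2) * α ^ 2 * Z ^ (2 / n)) *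
        ∫ x : EuclideanSpace ℝ (Fin d), ‖fderiv ℝ w x‖ ^ 2 * ‖x‖ ^ (-(2 * a)) := by
  haveI : Nontrivial (EuclideanSpace ℝ (Fin d)) := ckn_eucl_nontrivial (by omega)
  have hd3 : (3:ℝ) ≤ (d:ℝ) := by exact_mod_cast hd
  have he : (0:ℝ) < 1 + a - b := by linarith
  have hD : (0:ℝ) < (d:ℝ) - 2 + 2*(b-a) := by linarith
  have hDh : (0:ℝ) < ((d:ℝ)-2)/2 - a + b := by linarith
  have h1 : n * (1+a-b) = (d:ℝ) := by rw [hn, div_mul_cancel₀ _ he.ne']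
  have h2 : p * ((d:ℝ)-2+2*(b-a)) = 2*(d:ℝ) := by rw [hp, div_mul_cancel₀ _ hD.ne']
  have h3 : α * (((d:ℝ)-2)/2 - a + b) = (((d:ℝ)-2)/2 - a) * (a+1-b) := by
    rw [hα, div_mul_cancel₀ _ hDh.ne']
  have hEDh : (1+a-b) * (((d:ℝ)-2)/2 - a + b) ≠ 0 := (mul_pos he hDh).ne'
  have hn0 : 0 < n := by
    rw [hn]; positivity
  have hn3 : 3 ≤ n := by
    rw [hn, le_div_iff₀ he]; nlinarith
  have hn2 : 2 < n := by linarith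
  have hp0 : 0 < p := by
    rw [hp]; positivity
  have hpn : p * (n - 2) = 2 * n := by
    rw [hp, hn]; field_simp; ring
  have hnα : n * α = (d:ℝ) - b * p := by
    have hW : (n*α - ((d:ℝ) - b*p)) * ((1+a-b) * (((d:ℝ)-2)/2 - a + b)) = 0 := by
      linear_combination (α*(((d:ℝ)-2)/2 - a + b))*h1 + (d:ℝ)*h3 + (b*(1+a-b)/2)*h2
    rcases mul_eq_zero.1 hW with h | h
    · linarith
    · exact absurd h hEDh
  have hn2α : (n-2) * α = (d:ℝ) - 2 - 2*a := by
    have hW : ((n-2)*α - ((d:ℝ) - 2 - 2*a)) * ((1+a-b) * (((d:ℝ)-2)/2 - a + b)) = 0 := by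
      linear_combination (α*(((d:ℝ)-2)/2 - a + b))*h1 + ((d:ℝ)-2*(1+a-b))*h3
    rcases mul_eq_zero.1 hW with h | h
    · linarith
    · exact absurd h hEDh
  have h2p : 2/p = (n-2)/n := by
    rw [div_eq_div_iff hp0.ne' hn0.ne']; linarith [hpn]
  have hd0 : 0 < d := by omega
  have hexp1 : -(b*p) = n*α - (d:ℝ) := by linarith
  have hexp2 : (n+2)*α - (d:ℝ) = 4*α - 2 - 2*a := by linarith [hn2α]
  have h2α : (0:ℝ) < 2*α := by linarith
  -- the two radial profiles
  set f₁ : ℝ → ℝ := fun r => r ^ (n*α - (d:ℝ)) * (1 + r^(2*α)) ^ (-n) with hf₁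
  set f₂ : ℝ → ℝ := fun r => r ^ ((n+2)*α - (d:ℝ)) * (1 + r^(2*α)) ^ (-n) with hf₂
  set K : ℝ := ((n-2)*α/2)^2 * 2^n with hK
  -- one-dimensional integrals
  set A := ∫ u in Ioi (0:ℝ), u ^ (n/2 - 1) * (1+u) ^ (-n) with hA
  set C := ∫ u in Ioi (0:ℝ), u ^ (n/2 + 1 - 1) * (1+u) ^ (-n) with hC
  have hintA : IntegrableOn (fun u : ℝ => u ^ (n/2 - 1) * (1+u) ^ (-n)) (Ioi 0) :=
    ckn_onedim_integrable (by linarith) (by linarith)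
  have hintC : IntegrableOn (fun u : ℝ => u ^ (n/2 + 1 - 1) * (1+u) ^ (-n)) (Ioi 0) :=
    ckn_onedim_integrable (by linarith) (by linarith)
  have hA0 : 0 < A := ckn_onedim_pos hintA
  have hCA : C = n/(n-2) * A := ckn_onedim_ibp hn2
  -- ball volume constant
  set κ := (volume (ball (0 : EuclideanSpace ℝ (Fin d)) 1)).toReal with hκ
  have hκ0 : 0 < κ := by
    haveI := ckn_eucl_nontrivial hd0
    rw [hκ]
    apply ENNReal.toReal_pos
    · exact (measure_ball_pos _ _ (by norm_num)).ne'
    · exact measure_ball_lt_top.ne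
  -- cast d - 1
  have hd1 : ((d-1 : ℕ) : ℝ) = (d:ℝ) - 1 := by
    have h : (1:ℕ) ≤ d := by omega
    push_cast [Nat.cast_sub h]
    ring
  -- 1D identifications
  have hEq1 : EqOn (fun r : ℝ => r ^ (d-1 : ℕ) * f₁ r)
      (fun r : ℝ => r ^ (2*α*(n/2) - 1) * (1 + r^(2*α)) ^ (-n)) (Ioi 0) := by
    intro r hr
    have hr0 : (0:ℝ) < r := hr
    simp only [hf₁]
    rw [← Real.rpow_natCast r (d-1), hd1, ← mul_assoc, ← Real.rpow_add hr0,
      show ((d:ℝ)-1) + (n*α - (d:ℝ)) = 2*α*(n/2) - 1 by ring]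
  have hEq2 : EqOn (fun r : ℝ => r ^ (d-1 : ℕ) * f₂ r)
      (fun r : ℝ => r ^ (2*α*(n/2+1) - 1) * (1 + r^(2*α)) ^ (-n)) (Ioi 0) := by
    intro r hr
    have hr0 : (0:ℝ) < r := hr
    simp only [hf₂]
    rw [← Real.rpow_natCast r (d-1), hd1, ← mul_assoc, ← Real.rpow_add hr0,
      show ((d:ℝ)-1) + ((n+2)*α - (d:ℝ)) = 2*α*(n/2+1) - 1 by ring]
  -- integrability of the radial profiles against r^(d-1)
  have hIntf₁ : IntegrableOn (fun r : ℝ => r ^ (d-1 : ℕ) * f₁ r) (Ioi 0) := by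
    rw [integrableOn_congr_fun hEq1 measurableSet_Ioi]
    exact (ckn_subst_integrableOn h2α).2 hintA
  have hIntf₂ : IntegrableOn (fun r : ℝ => r ^ (d-1 : ℕ) * f₂ r) (Ioi 0) := by
    rw [integrableOn_congr_fun hEq2 measurableSet_Ioi]
    exact (ckn_subst_integrableOn h2α).2 hintC
  have hmf₁ : Measurable f₁ :=
    (measurable_id.pow_const _).mul
      ((measurable_const.add (measurable_id.pow_const _)).pow_const _)
  have hmf₂ : Measurable f₂ :=
    (measurable_id.pow_const _).mul
      ((measurable_const.add (measurable_id.pow_const _)).pow_const _)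
  have hnnf₁ : ∀ r : ℝ, 0 ≤ r → 0 ≤ f₁ r := fun r hr =>
    mul_nonneg (rpow_nonneg hr _) (rpow_nonneg (by positivity) _)
  have hnnf₂ : ∀ r : ℝ, 0 ≤ r → 0 ≤ f₂ r := fun r hr =>
    mul_nonneg (rpow_nonneg hr _) (rpow_nonneg (by positivity) _)
  have hIf₁ : Integrable (fun x : EuclideanSpace ℝ (Fin d) => f₁ ‖x‖) :=
    ckn_radial_integrable hd0 f₁ hmf₁ hnnf₁ hIntf₁
  have hIf₂ : Integrable (fun x : EuclideanSpace ℝ (Fin d) => f₂ ‖x‖) :=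
    ckn_radial_integrable hd0 f₂ hmf₂ hnnf₂ hIntf₂
  -- values of the radial integrals
  have hval₁ : ∫ x : EuclideanSpace ℝ (Fin d), f₁ ‖x‖ = (d:ℝ) * κ * ((2*α)⁻¹ * A) := by
    rw [ckn_radial_integral hd0 f₁, mul_assoc, mul_assoc]
    congr 1
    congr 1
    rw [setIntegral_congr_fun measurableSet_Ioi hEq1, ckn_subst_integral h2α]
  have hval₂ : ∫ x : EuclideanSpace ℝ (Fin d), f₂ ‖x‖ = (d:ℝ) * κ * ((2*α)⁻¹ * C) := by
    rw [ckn_radial_integral hd0 f₂, mul_assoc, mul_assoc]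
    congr 1
    congr 1
    rw [setIntegral_congr_fun measurableSet_Ioi hEq2, ckn_subst_integral h2α]
  -- pointwise identity for the first integrand
  have hhalf : ∀ t : ℝ, 0 ≤ t → ((1+t)/2 : ℝ) ^ (-n) = 2^n * (1+t) ^ (-n) := by
    intro t ht
    rw [Real.div_rpow (by linarith) (by norm_num : (0:ℝ) ≤ 2),
      Real.rpow_neg (by norm_num : (0:ℝ) ≤ 2), div_eq_mul_inv, inv_inv, mul_comm]
  have hwp : (fun x : EuclideanSpace ℝ (Fin d) => w x ^ p * ‖x‖ ^ (-(b*p))) =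
      fun x : EuclideanSpace ℝ (Fin d) => 2^n * f₁ ‖x‖ := by
    funext x
    rw [hw x]
    have hs0 : (0:ℝ) ≤ ‖x‖ ^ (2*α) := rpow_nonneg (norm_nonneg x) _
    have hBpos : (0:ℝ) < (1 + ‖x‖^(2*α))/2 := by positivity
    have e1 : (((1 + ‖x‖^(2*α))/2) ^ (-((n-2)/2))) ^ p = ((1 + ‖x‖^(2*α))/2) ^ (-n) := by
      rw [← Real.rpow_mul hBpos.le,
        show -((n-2)/2)*p = -n by linear_combination (-(1:ℝ)/2) * hpn]
    rw [e1, hhalf _ hs0, hexp1]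
    simp only [hf₁]
    ring
  have hI1 : ∫ x : EuclideanSpace ℝ (Fin d), w x ^ p * ‖x‖ ^ (-(b*p)) = Z := by
    rw [hwp, integral_const_mul, hval₁, hZ]
    congr 1
    have : (fun x : EuclideanSpace ℝ (Fin d) => ‖x‖ ^ (-(b*p)) * (1 + ‖x‖^(2*α)) ^ (-n)) =
        fun x : EuclideanSpace ℝ (Fin d) => f₁ ‖x‖ := by
      funext x
      rw [hexp1]
    rw [this, hval₁]
  have hZval : Z = 2^n * ((d:ℝ) * κ * ((2*α)⁻¹ * A)) := by
    rw [← hI1, hwp, integral_const_mul, hval₁]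
  have h2n0 : (0:ℝ) < (2:ℝ)^n := rpow_pos_of_pos two_pos n
  have hZ0 : 0 < Z := by
    rw [hZval]
    have : 0 < (2*α)⁻¹ * A := mul_pos (by positivity) hA0
    positivity
  -- gradient pointwise identity
  have hgrad : ∀ x : EuclideanSpace ℝ (Fin d), x ≠ 0 →
      ‖fderiv ℝ w x‖ ^ 2 * ‖x‖ ^ (-(2*a)) = K * f₂ ‖x‖ := by
    intro x hx
    have hr0 : (0:ℝ) < ‖x‖ := norm_pos_iff.2 hx
    rw [ckn_norm_fderiv_w hn2 hα0 w hw x hx]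
    have hBpos : (0:ℝ) < (1 + ‖x‖^(2*α))/2 := by
      have := rpow_pos_of_pos hr0 (2*α)
      positivity
    have hsq1 : (((1 + ‖x‖^(2*α))/2) ^ (-((n-2)/2) - 1))^2 =
        2^n * (1 + ‖x‖^(2*α)) ^ (-n) := by
      rw [sq, ← Real.rpow_add hBpos,
        show (-((n-2)/2) - 1) + (-((n-2)/2) - 1) = -n by ring]
      exact hhalf _ (by positivity)
    have hsq2 : (‖x‖ ^ (2*α - 2))^2 = ‖x‖ ^ (4*α - 4) := by
      rw [sq, ← Real.rpow_add hr0, show (2*α-2) + (2*α-2) = 4*α-4 by ring]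
    have hrcomb : ‖x‖^(4*α-4) * (‖x‖*‖x‖) * ‖x‖^(-(2*a)) = ‖x‖^((n+2)*α - (d:ℝ)) := by
      have hxx : ‖x‖*‖x‖ = ‖x‖^(2:ℝ) := by
        rw [show (2:ℝ) = 1+1 by norm_num, Real.rpow_add hr0, Real.rpow_one]
      rw [hxx, ← Real.rpow_add hr0, ← Real.rpow_add hr0, hexp2,
        show 4*α-4 + 2 + -(2*a) = 4*α - 2 - 2*a by ring]
    have expand : (((n-2)/2 * (((1 + ‖x‖^(2*α))/2) ^ (-((n-2)/2) - 1)) *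
          (α * ‖x‖^(2*α-2)/2)) * (2*‖x‖))^2 * ‖x‖ ^ (-(2*a)) =
        (((n-2)*α/2)^2) * ((((1 + ‖x‖^(2*α))/2) ^ (-((n-2)/2) - 1))^2 *
          ((‖x‖^(2*α-2))^2 * (‖x‖*‖x‖) * ‖x‖^(-(2*a)))) := by
      ring
    rw [expand, hsq1, hsq2, hrcomb]
    simp only [hf₂, hK]
    ring
  have h0ae : ∀ᵐ x : EuclideanSpace ℝ (Fin d) ∂volume, x ≠ 0 := by
    rw [ae_iff]
    have : {x : EuclideanSpace ℝ (Fin d) | ¬ x ≠ 0} = {0} := by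
      ext x; simp
    rw [this]
    exact measure_singleton 0
  have h_ae : (fun x : EuclideanSpace ℝ (Fin d) => K * f₂ ‖x‖) =ᵐ[volume]
      (fun x : EuclideanSpace ℝ (Fin d) => ‖fderiv ℝ w x‖ ^ 2 * ‖x‖ ^ (-(2*a))) := by
    filter_upwards [h0ae] with x hx
    exact (hgrad x hx).symm
  have hI2 : ∫ x : EuclideanSpace ℝ (Fin d), ‖fderiv ℝ w x‖ ^ 2 * ‖x‖ ^ (-(2*a)) =
      n*(n-2)*α^2/4 * Z := by
    rw [← integral_congr_ae h_ae, integral_const_mul, hval₂, hCA, hZval]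
    rw [hK]
    have hn2' : n - 2 ≠ 0 := by linarith
    field_simp
    ring
  refine ⟨?_, ?_, ?_⟩
  · rw [hwp]
    exact hIf₁.const_mul _
  · exact (hIf₂.const_mul K).congr h_ae
  · rw [hI1, hI2, h2p]
    have hZ2n : (0:ℝ) < Z ^ (2/n) := rpow_pos_of_pos hZ0 _
    have hstep : 4 / (n * (n - 2) * α ^ 2 * Z ^ (2 / n)) * (n*(n-2)*α^2/4 * Z) =
        Z / Z^(2/n) := by
      have hn2' : n - 2 ≠ 0 := by linarith
      field_simp
    rw [hstep, eq_div_iff hZ2n.ne', ← Real.rpow_add hZ0,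
      show (n-2)/n + 2/n = 1 by field_simp; ring, Real.rpow_one]
end

section
/- Let d ≥ 3 be an integer, a_c = (d−2)/2, and let (a,b) ∈ ℝ² satisfy a ≤ b < a+1 and a < a_c. Set n = d/(1+a−b) and α = (a_c−a)(a+1−b)/(a_c−a+b), so α > 0. Define φ(x) = (1+|x|^{2α})/2 and V = log φ on ℝ^d∖{0}. Then for every x ∈ ℝ^d∖{0}, |x|^{2(1−α)} [ ΔV(x) − (2a/|x|²) x·∇V(x) ] − ((n−2)/2) |x|^{2(1−α)} |∇V(x)|² = nα² / (2 φ(x)²), where Δ is the Euclidean Laplacian and ∇ the Euclidean gradient. -/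
open MeasureTheory Real
open scoped RealInnerProductSpace

/-- The Euclidean Laplacian of a function on `EuclideanSpace ℝ (Fin d)`. -/
noncomputable def euclideanLaplacian {d : ℕ} (u : EuclideanSpace ℝ (Fin d) → ℝ)
    (x : EuclideanSpace ℝ (Fin d)) : ℝ :=
  ∑ i : Fin d, fderiv ℝ (fun y => fderiv ℝ u y (EuclideanSpace.single i 1)) x
    (EuclideanSpace.single i 1)

noncomputable def g1fun (α : ℝ) : ℝ → ℝ := fun t => α * t ^ (α - 1) / (1 + t ^ α)
noncomputable def g2fun (α : ℝ) : ℝ → ℝ := fun t =>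
  α * (α - 1) * t ^ (α - 2) / (1 + t ^ α) - (α * t ^ (α - 1)) ^ 2 / (1 + t ^ α) ^ 2

lemma one_add_rpow_pos {t p : ℝ} (ht : 0 < t) : 0 < 1 + t ^ p := by positivity

lemma hasDerivAt_g (α : ℝ) {t : ℝ} (ht : 0 < t) :
    HasDerivAt (fun t => Real.log ((1 + t ^ α) / 2)) (g1fun α t) t := by
  have h1 : HasDerivAt (fun t : ℝ => (1 + t ^ α) / 2) (α * t ^ (α - 1) / 2) t := by
    have := (Real.hasDerivAt_rpow_const (p := α) (Or.inl ht.ne'))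
    exact ((this.const_add 1).div_const 2)
  have h2 : ((1 + t ^ α) / 2) ≠ 0 := by positivity
  have := h1.log h2
  convert this using 1
  have := one_add_rpow_pos (p := α) ht
  simp only [g1fun]
  field_simp

lemma hasDerivAt_g1 (α : ℝ) {t : ℝ} (ht : 0 < t) :
    HasDerivAt (g1fun α) (g2fun α t) t := by
  have hnum : HasDerivAt (fun t : ℝ => α * t ^ (α - 1)) (α * ((α - 1) * t ^ (α - 1 - 1))) t :=
    (Real.hasDerivAt_rpow_const (p := α - 1) (Or.inl ht.ne')).const_mul α
  have hden : HasDerivAt (fun t : ℝ => 1 + t ^ α) (α * t ^ (α - 1)) t := by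
    simpa using (Real.hasDerivAt_rpow_const (p := α) (Or.inl ht.ne')).const_add 1
  have hP : (1 + t ^ α) ≠ 0 := (one_add_rpow_pos ht).ne'
  have := hnum.div hden hP
  refine this.congr_deriv ?_
  have h1 : t ^ (α - 1 - 1) = t ^ (α - 2) := by ring_nf
  simp only [g2fun, h1]
  field_simp

section Euclid
variable {d : ℕ} (α : ℝ)

lemma hasFDerivAt_normSq (y : EuclideanSpace ℝ (Fin d)) :
    HasFDerivAt (fun z : EuclideanSpace ℝ (Fin d) => (‖z‖ ^ 2 : ℝ)) (2 • innerSL ℝ y) y := by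
  simpa using (hasFDerivAt_id y).norm_sq

lemma hasFDerivAt_V {y : EuclideanSpace ℝ (Fin d)} (hy : y ≠ 0) :
    HasFDerivAt (fun z : EuclideanSpace ℝ (Fin d) => Real.log ((1 + (‖z‖ ^ 2 : ℝ) ^ α) / 2))
      ((g1fun α (‖y‖ ^ 2)) • (2 • innerSL ℝ y)) y := by
  have hy' : (0:ℝ) < ‖y‖ := norm_pos_iff.mpr hy
  exact (hasDerivAt_g α (by positivity)).comp_hasFDerivAt y (hasFDerivAt_normSq y)

lemma hasGradientAt_V {y : EuclideanSpace ℝ (Fin d)} (hy : y ≠ 0) :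
    HasGradientAt (fun z : EuclideanSpace ℝ (Fin d) => Real.log ((1 + (‖z‖ ^ 2 : ℝ) ^ α) / 2))
      ((2 * g1fun α (‖y‖ ^ 2)) • y) y := by
  rw [hasGradientAt_iff_hasFDerivAt]
  refine (hasFDerivAt_V α hy).congr_fderiv ?_
  ext e
  simp [InnerProductSpace.toDual_apply_apply, real_inner_smul_left, two_smul]
  ring

end Euclid


/-- Key conformal computation: L̂V - ((n-2)/2)Γ̂(V) = nα²/(2φ²) for V = log φ,
φ = (1+|x|^{2α})/2, on the Euclidean CKN space. -/
theorem conformal_identity_spherical (d : ℕ) (hd : 3 ≤ d) (a b n α : ℝ)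
    (hab : a ≤ b) (hba : b < a + 1) (ha : a < ((d : ℝ) - 2) / 2)
    (hn : n = (d : ℝ) / (1 + a - b))
    (hα : α = (((d : ℝ) - 2) / 2 - a) * (a + 1 - b) / (((d : ℝ) - 2) / 2 - a + b))
    (V : EuclideanSpace ℝ (Fin d) → ℝ)
    (hV : ∀ x, V x = Real.log ((1 + ‖x‖ ^ (2 * α)) / 2)) :
    ∀ x : EuclideanSpace ℝ (Fin d), x ≠ 0 →
      ‖x‖ ^ (2 * (1 - α)) *
          (euclideanLaplacian V x - 2 * a / ‖x‖ ^ 2 * ⟪x, gradient V x⟫)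
        - (n - 2) / 2 * (‖x‖ ^ (2 * (1 - α)) * ‖gradient V x‖ ^ 2) =
      n * α ^ 2 / (2 * ((1 + ‖x‖ ^ (2 * α)) / 2) ^ 2) := by
  -- basic positivity
  have hd' : (3:ℝ) ≤ (d:ℝ) := by exact_mod_cast hd
  have hden1 : 0 < 1 + a - b := by linarith
  have hden2 : 0 < ((d : ℝ) - 2) / 2 - a + b := by linarith
  have h1 : (1 + a - b) ≠ 0 := ne_of_gt hden1
  have h2 : (((d : ℝ) - 2) / 2 - a + b) ≠ 0 := ne_of_gt hden2
  have hα0 : 0 < α := by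
    rw [hα]; exact div_pos (mul_pos (by linarith) (by linarith)) hden2
  -- key algebraic identity
  have key : n * α = 2 * α + (d : ℝ) - 2 - 2 * a := by
    have e2 : n * (1 + a - b) = d := by rw [hn]; field_simp
    have e1 : α * (((d:ℝ)-2)/2 - a + b) = (((d:ℝ)-2)/2 - a) * (a+1-b) := by
      rw [hα, div_mul_cancel₀ _ h2]
    have key3 : (n * α) * ((1 + a - b) * (((d:ℝ)-2)/2 - a + b))
        = (2 * α + (d:ℝ) - 2 - 2*a) * ((1 + a - b) * (((d:ℝ)-2)/2 - a + b)) := by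
      linear_combination (α * (((d:ℝ)-2)/2 - a + b)) * e2 + (2 * (((d:ℝ)-2)/2 - a + b)) * e1
    exact mul_right_cancel₀ (mul_ne_zero h1 h2) key3
  have hn' : n = (2 * α + (d : ℝ) - 2 - 2 * a) / α := by
    rw [eq_div_iff (ne_of_gt hα0)]; exact key
  -- rewrite V
  have hV' : V = fun z : EuclideanSpace ℝ (Fin d) =>
      Real.log ((1 + ((‖z‖ ^ 2 : ℝ)) ^ α) / 2) := by
    funext z
    rw [hV]
    congr 2
    rw [← Real.rpow_natCast ‖z‖ 2, ← Real.rpow_mul (norm_nonneg z)]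
    norm_num
  subst hV'
  intro x hx
  have hr : (0:ℝ) < ‖x‖ := norm_pos_iff.mpr hx
  set s : ℝ := ‖x‖ ^ 2 with hs_def
  have hs : 0 < s := by positivity
  -- gradient
  have hgrad : gradient (fun z : EuclideanSpace ℝ (Fin d) =>
      Real.log ((1 + ((‖z‖ ^ 2 : ℝ)) ^ α) / 2)) x = (2 * g1fun α s) • x :=
    (hasGradientAt_V α hx).gradient
  -- Laplacian
  have hlap : euclideanLaplacian (fun z : EuclideanSpace ℝ (Fin d) =>
      Real.log ((1 + ((‖z‖ ^ 2 : ℝ)) ^ α) / 2)) x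
      = 2 * d * g1fun α s + 4 * g2fun α s * s := by
    have hsum : ∀ i : Fin d,
        fderiv ℝ (fun z : EuclideanSpace ℝ (Fin d) =>
          fderiv ℝ (fun z : EuclideanSpace ℝ (Fin d) =>
            Real.log ((1 + ((‖z‖ ^ 2 : ℝ)) ^ α) / 2)) z (EuclideanSpace.single i 1)) x
          (EuclideanSpace.single i 1)
        = 2 * g1fun α s + 4 * g2fun α s * (x i) ^ 2 := by
      intro i
      set e : EuclideanSpace ℝ (Fin d) := EuclideanSpace.single i (1:ℝ) with he
      have hev : (fun z : EuclideanSpace ℝ (Fin d) =>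
          fderiv ℝ (fun z : EuclideanSpace ℝ (Fin d) =>
            Real.log ((1 + ((‖z‖ ^ 2 : ℝ)) ^ α) / 2)) z e) =ᶠ[nhds x]
          (fun z : EuclideanSpace ℝ (Fin d) => 2 * g1fun α (‖z‖ ^ 2) * (innerSL ℝ e z)) := by
        filter_upwards [eventually_ne_nhds hx] with z hz
        rw [(hasFDerivAt_V α hz).fderiv]
        simp [he, EuclideanSpace.inner_single_right, EuclideanSpace.inner_single_left,
          real_inner_comm, two_smul]
        ring
      have hc : HasFDerivAt (fun z : EuclideanSpace ℝ (Fin d) => 2 * g1fun α (‖z‖ ^ 2))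
          ((2:ℝ) • ((g2fun α s) • (2 • innerSL ℝ x))) x :=
        ((hasDerivAt_g1 α hs).comp_hasFDerivAt (f := fun z : EuclideanSpace ℝ (Fin d) => ‖z‖ ^ 2)
          x (hasFDerivAt_normSq x)).const_mul 2
      have hd2 : HasFDerivAt (fun z : EuclideanSpace ℝ (Fin d) => (innerSL ℝ e) z)
          (innerSL ℝ e) x := (innerSL ℝ e).hasFDerivAt
      have hF : HasFDerivAt (fun z : EuclideanSpace ℝ (Fin d) =>
          2 * g1fun α (‖z‖ ^ 2) * (innerSL ℝ e) z) _ x := hc.mul hd2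
      rw [hev.fderiv_eq, hF.fderiv]
      simp [he, EuclideanSpace.inner_single_left, EuclideanSpace.inner_single_right,
        EuclideanSpace.single_apply, real_inner_smul_left, two_smul]
      ring
    rw [euclideanLaplacian]
    simp only [hsum]
    rw [Finset.sum_add_distrib, Finset.sum_const, Finset.card_univ]
    have hxsq : ∑ i : Fin d, (x i) ^ 2 = s := by
      rw [hs_def, PiLp.norm_sq_eq_of_L2]
      simp [sq_abs]
    rw [← Finset.mul_sum, hxsq]
    simp
    ring
  rw [hlap, hgrad]
  -- inner product and norm of gradient
  have hip : ⟪x, (2 * g1fun α s) • x⟫ = 2 * g1fun α s * s := by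
    rw [real_inner_smul_right, real_inner_self_eq_norm_sq]
  have hnm : ‖(2 * g1fun α s) • x‖ ^ 2 = (2 * g1fun α s) ^ 2 * s := by
    rw [norm_smul, mul_pow, Real.norm_eq_abs, sq_abs, hs_def]
  rw [hip, hnm]
  -- rpow conversions
  have hr2α : ‖x‖ ^ (2 * α) = s ^ α := by
    rw [hs_def, ← Real.rpow_natCast ‖x‖ 2, ← Real.rpow_mul (norm_nonneg x)]
    norm_num
  have hr1α : ‖x‖ ^ (2 * (1 - α)) = s ^ (1 - α) := by
    rw [hs_def, ← Real.rpow_natCast ‖x‖ 2, ← Real.rpow_mul (norm_nonneg x)]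
    norm_num
  rw [hr2α, hr1α]
  set T : ℝ := s ^ α with hT
  have hT0 : 0 < T := Real.rpow_pos_of_pos hs α
  have hA : s ^ (α - 1) = T / s := by rw [hT, Real.rpow_sub hs, Real.rpow_one]
  have hs2 : s ^ ((2:ℝ)) = s ^ 2 := by
    rw [← Real.rpow_natCast s 2]; norm_num
  have hB : s ^ (α - 2) = T / s ^ 2 := by
    rw [hT, show (α - 2) = α - ((2:ℕ):ℝ) by norm_num, Real.rpow_sub hs, Real.rpow_natCast]
  have hC : s ^ (1 - α) = s / T := by rw [hT, Real.rpow_sub hs, Real.rpow_one]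
  have hPT : 0 < 1 + T := by positivity
  rw [g1fun, g2fun, hA, hB, hC, hn']
  field_simp
  ring
end

section
/- Let d ≥ 3 be an integer, a_c = (d−2)/2, and let (a,b) ∈ ℝ² satisfy a ≤ b < a+1 and a < a_c. Set n = d/(1+a−b) and α = (a_c−a)(a+1−b)/(a_c−a+b), so α > 0. Define ψ(x) = (1−|x|^{2α})/2 and U = log ψ on the punctured open unit ball B∖{0} of ℝ^d. Then for every x with 0 < |x| < 1, |x|^{2(1−α)} [ ΔU(x) − (2a/|x|²) x·∇U(x) ] − ((n−2)/2) |x|^{2(1−α)} |∇U(x)|² = −nα² / (2 ψ(x)²), where Δ is the Euclidean Laplacian and ∇ the Euclidean gradient. -/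
open MeasureTheory Real
open scoped RealInnerProductSpace

private lemma hasDerivAt_Glog {α t : ℝ} (hα : 0 < α) (ht : 0 < t) (ht1 : t < 1) :
    HasDerivAt (fun t : ℝ => Real.log ((1 - t ^ α) / 2)) (-α * t ^ (α - 1) / (1 - t ^ α)) t := by
  have h1 : HasDerivAt (fun t : ℝ => t ^ α) (α * t ^ (α - 1)) t :=
    Real.hasDerivAt_rpow_const (Or.inl ht.ne')
  have hp1 : t ^ α < 1 := Real.rpow_lt_one ht.le ht1 hα
  have h2 : HasDerivAt (fun t : ℝ => (1 - t ^ α) / 2) (-(α * t ^ (α - 1)) / 2) t := by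
    simpa using ((hasDerivAt_const t (1:ℝ)).sub h1).div_const 2
  have h3 : (1 - t ^ α) / 2 ≠ 0 := by
    have : 0 < 1 - t ^ α := by linarith
    positivity
  have h4 := h2.log h3
  convert h4 using 1
  have : 1 - t ^ α ≠ 0 := by intro h; exact h3 (by rw [h]; ring)
  field_simp

private lemma hasDerivAt_G1 {α t : ℝ} (hα : 0 < α) (ht : 0 < t) (ht1 : t < 1) :
    HasDerivAt (fun t : ℝ => -α * t ^ (α - 1) / (1 - t ^ α))
      (((-α * ((α - 1) * t ^ (α - 1 - 1))) * (1 - t ^ α) -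
        (-α * t ^ (α - 1)) * (-(α * t ^ (α - 1)))) / (1 - t ^ α) ^ 2) t := by
  have h1 : HasDerivAt (fun t : ℝ => t ^ α) (α * t ^ (α - 1)) t :=
    Real.hasDerivAt_rpow_const (Or.inl ht.ne')
  have h1' : HasDerivAt (fun t : ℝ => t ^ (α - 1)) ((α - 1) * t ^ (α - 1 - 1)) t :=
    Real.hasDerivAt_rpow_const (Or.inl ht.ne')
  have hu : HasDerivAt (fun t : ℝ => -α * t ^ (α - 1)) (-α * ((α - 1) * t ^ (α - 1 - 1))) t :=
    h1'.const_mul (-α)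
  have hv : HasDerivAt (fun t : ℝ => 1 - t ^ α) (-(α * t ^ (α - 1))) t := by
    have := (hasDerivAt_const t (1:ℝ)).sub h1
    simp only [zero_sub] at this
    exact this
  have hp1 : t ^ α < 1 := Real.rpow_lt_one ht.le ht1 hα
  have hvne : 1 - t ^ α ≠ 0 := by linarith
  exact hu.div hv hvne

private lemma scalar_identity (a d n α s A : ℝ) (hs : s ≠ 0) (hA : A ≠ 0) (h1A : 1 - A ≠ 0)
    (key : (n - 2) * α = d - 2 - 2 * a) :
    (s / A) * ((2 * d * (-α * (A / s) / (1 - A)) +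
        4 * (((-α * ((α - 1) * (A / s ^ 2))) * (1 - A) -
          (-α * (A / s)) * (-(α * (A / s)))) / (1 - A) ^ 2) * s)
      - 2 * a / s * (2 * (-α * (A / s) / (1 - A)) * s))
      - (n - 2) / 2 * ((s / A) * ((2 * (-α * (A / s) / (1 - A))) ^ 2 * s)) =
      -(n * α ^ 2) / (2 * ((1 - A) / 2) ^ 2) := by
  have hd : d = (n - 2) * α + 2 + 2 * a := by linarith
  rw [hd]
  field_simp
  ring

/-- Key conformal computation: L̂U - ((n-2)/2)Γ̂(U) = -nα²/(2ψ²) for U = log ψ,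
ψ = (1-|x|^{2α})/2, on the punctured unit ball. -/
theorem conformal_identity_hyperbolic (d : ℕ) (hd : 3 ≤ d) (a b n α : ℝ)
    (hab : a ≤ b) (hba : b < a + 1) (ha : a < ((d : ℝ) - 2) / 2)
    (hn : n = (d : ℝ) / (1 + a - b))
    (hα : α = (((d : ℝ) - 2) / 2 - a) * (a + 1 - b) / (((d : ℝ) - 2) / 2 - a + b))
    (U : EuclideanSpace ℝ (Fin d) → ℝ)
    (hU : ∀ x, U x = Real.log ((1 - ‖x‖ ^ (2 * α)) / 2)) :
    ∀ x : EuclideanSpace ℝ (Fin d), 0 < ‖x‖ → ‖x‖ < 1 →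
      ‖x‖ ^ (2 * (1 - α)) *
          (euclideanLaplacian U x - 2 * a / ‖x‖ ^ 2 * ⟪x, gradient U x⟫)
        - (n - 2) / 2 * (‖x‖ ^ (2 * (1 - α)) * ‖gradient U x‖ ^ 2) =
      -(n * α ^ 2) / (2 * ((1 - ‖x‖ ^ (2 * α)) / 2) ^ 2) := by
  -- positivity facts
  have hd3 : (3:ℝ) ≤ (d:ℝ) := by exact_mod_cast hd
  have hden1 : (0:ℝ) < 1 + a - b := by linarith
  have hnum : (0:ℝ) < ((d : ℝ) - 2) / 2 - a := by linarith
  have hden2 : (0:ℝ) < ((d : ℝ) - 2) / 2 - a + b := by linarith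
  have hαpos : 0 < α := by
    rw [hα]
    have : (0:ℝ) < a + 1 - b := by linarith
    positivity
  have key : (n - 2) * α = (d : ℝ) - 2 - 2 * a := by
    have e1 : (1 + a - b) ≠ 0 := hden1.ne'
    have e2 : ((d : ℝ) - 2) / 2 - a + b ≠ 0 := hden2.ne'
    have e3 : (d:ℝ) - 2 - 2 * a + b * 2 ≠ 0 := by
      have : (0:ℝ) < (d:ℝ) - 2 - 2 * a + b * 2 := by linarith
      exact this.ne'
    rw [hn, hα]
    rw [div_sub' e1, div_mul_div_comm, div_eq_iff (mul_ne_zero e1 e2)]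
    ring
  -- rewrite U as a function of ‖y‖²
  have hUeq : U = fun y : EuclideanSpace ℝ (Fin d) =>
      Real.log ((1 - ((‖y‖ ^ 2 : ℝ)) ^ α) / 2) := by
    funext y
    rw [hU]
    congr 3
    rw [← Real.rpow_natCast ‖y‖ 2, ← Real.rpow_mul (norm_nonneg y)]
    norm_num
  have hUderiv : ∀ y : EuclideanSpace ℝ (Fin d), 0 < ‖y‖ → ‖y‖ < 1 →
      HasFDerivAt U ((-α * ((‖y‖ ^ 2 : ℝ)) ^ (α - 1) / (1 - ((‖y‖ ^ 2 : ℝ)) ^ α)) •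
        (2 • (innerSL ℝ y))) y := by
    intro y hy0 hy1
    have hq : HasFDerivAt (fun z : EuclideanSpace ℝ (Fin d) => (‖z‖ ^ 2 : ℝ))
        (2 • (innerSL ℝ y)) y := by
      simpa using (hasFDerivAt_id y).norm_sq
    have hs0 : (0:ℝ) < ‖y‖ ^ 2 := by positivity
    have hs1 : (‖y‖ ^ 2 : ℝ) < 1 := by nlinarith
    have hg := hasDerivAt_Glog hαpos hs0 hs1
    have := hg.comp_hasFDerivAt y hq
    rw [hUeq]
    exact this
  intro x hx0 hx1
  have hs0 : (0:ℝ) < ‖x‖ ^ 2 := by positivity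
  have hs1 : (‖x‖ ^ 2 : ℝ) < 1 := by nlinarith
  have hApos : (0:ℝ) < ((‖x‖ ^ 2 : ℝ)) ^ α := Real.rpow_pos_of_pos hs0 α
  have hA1 : ((‖x‖ ^ 2 : ℝ)) ^ α < 1 := Real.rpow_lt_one hs0.le hs1 hαpos
  have h1A : (1:ℝ) - ((‖x‖ ^ 2 : ℝ)) ^ α ≠ 0 := by linarith
  set s : ℝ := ‖x‖ ^ 2 with hsdef
  set A : ℝ := s ^ α with hAdef
  set G1s : ℝ := -α * s ^ (α - 1) / (1 - A) with hG1def
  set G2s : ℝ := ((-α * ((α - 1) * s ^ (α - 1 - 1))) * (1 - A) -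
        (-α * s ^ (α - 1)) * (-(α * s ^ (α - 1)))) / (1 - A) ^ 2 with hG2def
  -- gradient
  have hgradeq : gradient U x = (2 * G1s) • x := by
    have h := hUderiv x hx0 hx1
    have hL : (InnerProductSpace.toDual ℝ (EuclideanSpace ℝ (Fin d)) ((2 * G1s) • x) :
        EuclideanSpace ℝ (Fin d) →L[ℝ] ℝ) =
        (-α * s ^ (α - 1) / (1 - A)) • (2 • (innerSL ℝ x)) := by
      ext v
      simp only [InnerProductSpace.toDual_apply_apply, ContinuousLinearMap.smul_apply,
        innerSL_apply_apply, real_inner_smul_left, smul_eq_mul, hG1def]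
      ring
    have hg : HasGradientAt U ((2 * G1s) • x) x := by
      rw [hasGradientAt_iff_hasFDerivAt, hL]
      exact h
    exact hg.gradient
  have hinner : ⟪x, gradient U x⟫ = 2 * G1s * s := by
    rw [hgradeq, real_inner_smul_right, real_inner_self_eq_norm_sq]
  have hnormgrad : ‖gradient U x‖ ^ 2 = (2 * G1s) ^ 2 * s := by
    rw [hgradeq, norm_smul, mul_pow, Real.norm_eq_abs, sq_abs, hsdef]
  -- Laplacian
  have hq : HasFDerivAt (fun z : EuclideanSpace ℝ (Fin d) => (‖z‖ ^ 2 : ℝ))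
      (2 • (innerSL ℝ x)) x := by
    simpa using (hasFDerivAt_id x).norm_sq
  have hmem : {y : EuclideanSpace ℝ (Fin d) | 0 < ‖y‖ ∧ ‖y‖ < 1} ∈ nhds x := by
    have : IsOpen {y : EuclideanSpace ℝ (Fin d) | 0 < ‖y‖ ∧ ‖y‖ < 1} :=
      (isOpen_lt continuous_const continuous_norm).inter
        (isOpen_lt continuous_norm continuous_const)
    exact this.mem_nhds ⟨hx0, hx1⟩
  have hterm : ∀ i : Fin d,
      fderiv ℝ (fun y => fderiv ℝ U y (EuclideanSpace.single i 1)) x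
        (EuclideanSpace.single i 1) =
      2 * G1s + 4 * G2s * (x i) ^ 2 := by
    intro i
    have heq : (fun y => fderiv ℝ U y (EuclideanSpace.single i 1)) =ᶠ[nhds x]
        (fun y => (-α * ((‖y‖ ^ 2 : ℝ)) ^ (α - 1) / (1 - ((‖y‖ ^ 2 : ℝ)) ^ α)) * (2 * y i)) := by
      filter_upwards [hmem] with y hy
      rw [(hUderiv y hy.1 hy.2).fderiv]
      simp only [ContinuousLinearMap.smul_apply, smul_eq_mul, innerSL_apply_apply,
        EuclideanSpace.inner_single_right, map_one, one_mul, conj_trivial]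
      ring
    have hc : HasFDerivAt
        (fun y : EuclideanSpace ℝ (Fin d) =>
          -α * ((‖y‖ ^ 2 : ℝ)) ^ (α - 1) / (1 - ((‖y‖ ^ 2 : ℝ)) ^ α))
        (G2s • (2 • (innerSL ℝ x))) x :=
      by have := (hasDerivAt_G1 hαpos hs0 hs1).comp_hasFDerivAt x hq; exact this
    have hm : HasFDerivAt (fun y : EuclideanSpace ℝ (Fin d) => 2 * y i)
        ((2:ℝ) • (EuclideanSpace.proj i : EuclideanSpace ℝ (Fin d) →L[ℝ] ℝ)) x :=
      (EuclideanSpace.proj i : EuclideanSpace ℝ (Fin d) →L[ℝ] ℝ).hasFDerivAt.const_mul 2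
    have hprod := hc.mul hm
    rw [heq.fderiv_eq, (show HasFDerivAt (fun y : EuclideanSpace ℝ (Fin d) =>
        -α * ((‖y‖ ^ 2 : ℝ)) ^ (α - 1) / (1 - ((‖y‖ ^ 2 : ℝ)) ^ α) * (2 * y i)) _ x from hprod).fderiv]
    have h1 : (EuclideanSpace.proj i : EuclideanSpace ℝ (Fin d) →L[ℝ] ℝ)
        (EuclideanSpace.single i 1) = 1 := by
      change (EuclideanSpace.single i (1:ℝ)) i = 1
      simp [EuclideanSpace.single_apply]
    simp only [ContinuousLinearMap.add_apply, ContinuousLinearMap.smul_apply,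
      innerSL_apply_apply, EuclideanSpace.inner_single_right, h1,
      smul_eq_mul, map_one, conj_trivial, hG1def]
    ring
  have hsum : ∑ i : Fin d, (x i) ^ 2 = s := by
    rw [hsdef, EuclideanSpace.norm_eq, Real.sq_sqrt (by positivity)]
    simp [sq_abs]
  have hlap : euclideanLaplacian U x = 2 * d * G1s + 4 * G2s * s := by
    rw [euclideanLaplacian]
    simp only [hterm]
    rw [Finset.sum_add_distrib, Finset.sum_const, ← Finset.mul_sum, hsum]
    simp
    ring
  -- rpow bridging
  have hsne : s ≠ 0 := hs0.ne'
  have hAne : A ≠ 0 := hApos.ne'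
  have hA2α : ‖x‖ ^ (2 * α) = A := by
    rw [hAdef, hsdef, ← Real.rpow_natCast ‖x‖ 2, ← Real.rpow_mul (norm_nonneg x)]
    norm_num
  have hC : ‖x‖ ^ (2 * (1 - α)) = s / A := by
    have h1 : ‖x‖ ^ (2 * (1 - α)) = (s : ℝ) ^ (1 - α) := by
      rw [hsdef, ← Real.rpow_natCast ‖x‖ 2, ← Real.rpow_mul (norm_nonneg x)]
      norm_num
    rw [h1, Real.rpow_sub hs0, Real.rpow_one, hAdef]
  have hB : s ^ (α - 1) = A / s := by
    rw [hAdef, Real.rpow_sub hs0, Real.rpow_one]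
  have hD : s ^ (α - 1 - 1) = A / s ^ 2 := by
    rw [Real.rpow_sub hs0, hB, Real.rpow_one]
    rw [div_div, sq]
  -- final algebra
  rw [hlap, hinner, hnormgrad, hC, hA2α, hG1def, hG2def, hB, hD]
  exact scalar_identity a d n α s A hsne hAne h1A key
end

section
/- Let d ≥ 3 be an integer, a_c = (d−2)/2, and let (a,b) ∈ ℝ² satisfy a ≤ b < a+1 and a < a_c. Set n = d/(1+a−b) and α = (a_c−a)(a+1−b)/(a_c−a+b), so α > 0. Define g(x) = tanh(α ln|x|) for x ∈ ℝ^d∖{0}. Then g is an eigenfunction of the generator of the spherical CKN space with eigenvalue nα²: for every x ∈ ℝ^d∖{0}, |x|^{2(1−α)} ((1+|x|^{2α})²/4) [ Δg(x) − (2a/|x|²) x·∇g(x) − (n−2) (2α|x|^{2α−2}/(1+|x|^{2α})) x·∇g(x) ] = −nα² g(x), where Δ is the Euclidean Laplacian and ∇ the Euclidean gradient. -/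
open MeasureTheory Real
open scoped RealInnerProductSpace

lemma tanh_hasDerivAt (y : ℝ) : HasDerivAt Real.tanh (1 / Real.cosh y ^ 2) y := by
  have h := (Real.hasDerivAt_sinh y).div (Real.hasDerivAt_cosh y) (ne_of_gt (Real.cosh_pos y))
  have e : (Real.cosh y * Real.cosh y - Real.sinh y * Real.sinh y) / Real.cosh y ^ 2
      = 1 / Real.cosh y ^ 2 := by
    have := Real.cosh_sq_sub_sinh_sq y
    rw [show Real.cosh y * Real.cosh y - Real.sinh y * Real.sinh y
      = Real.cosh y ^ 2 - Real.sinh y ^ 2 by ring, this]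
  rw [e] at h
  exact h.congr_of_eventuallyEq (by filter_upwards with z; rw [Real.tanh_eq_sinh_div_cosh, Pi.div_apply])

lemma hA (α t : ℝ) (ht : 0 < t) :
    HasDerivAt (fun s => Real.tanh (α / 2 * Real.log s))
      (α / (2 * t) / Real.cosh (α / 2 * Real.log t) ^ 2) t := by
  have hl : HasDerivAt (fun s => α / 2 * Real.log s) (α / 2 * t⁻¹) t :=
    (Real.hasDerivAt_log (ne_of_gt ht)).const_mul (α / 2)
  have := (tanh_hasDerivAt (α / 2 * Real.log t)).comp t hl
  refine this.congr_deriv ?_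
  ring

lemma hB (α t : ℝ) (ht : 0 < t) :
    HasDerivAt (fun s => α / (2 * s) / Real.cosh (α / 2 * Real.log s) ^ 2)
      (-(α / (2 * t ^ 2)) / Real.cosh (α / 2 * Real.log t) ^ 2
        * (1 + α * Real.tanh (α / 2 * Real.log t))) t := by
  have hl : HasDerivAt (fun s => α / 2 * Real.log s) (α / 2 * t⁻¹) t :=
    (Real.hasDerivAt_log (ne_of_gt ht)).const_mul (α / 2)
  have hc : HasDerivAt (fun s => Real.cosh (α / 2 * Real.log s) ^ 2)
      (2 * Real.cosh (α / 2 * Real.log t) * Real.sinh (α / 2 * Real.log t) * (α / 2 * t⁻¹)) t := by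
    have h1 := ((Real.hasDerivAt_cosh (α / 2 * Real.log t)).comp t hl).pow 2
    refine h1.congr_deriv ?_
    simp [Function.comp]
    ring
  have hnum : HasDerivAt (fun s : ℝ => α / (2 * s)) (α / 2 * -(t ^ 2)⁻¹) t := by
    have h1 : HasDerivAt (fun s : ℝ => α / 2 * s⁻¹) (α / 2 * -(t ^ 2)⁻¹) t :=
      (hasDerivAt_inv (ne_of_gt ht)).const_mul (α / 2)
    exact h1.congr_of_eventuallyEq (by filter_upwards with s; ring)
  have hden_ne : Real.cosh (α / 2 * Real.log t) ^ 2 ≠ 0 := by positivity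
  have := hnum.div hc hden_ne
  refine this.congr_deriv ?_
  rw [Real.tanh_eq_sinh_div_cosh]
  have hcne : Real.cosh (α / 2 * Real.log t) ≠ 0 := ne_of_gt (Real.cosh_pos _)
  field_simp
  ring

/-- g(x) = tanh(α ln|x|) is an eigenfunction of the generator of the spherical
CKN space with eigenvalue nα². -/
theorem spherical_ckn_eigenfunction (d : ℕ) (hd : 3 ≤ d) (a b n α : ℝ)
    (hab : a ≤ b) (hba : b < a + 1) (ha : a < ((d : ℝ) - 2) / 2)
    (hn : n = (d : ℝ) / (1 + a - b))
    (hα : α = (((d : ℝ) - 2) / 2 - a) * (a + 1 - b) / (((d : ℝ) - 2) / 2 - a + b))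
    (g : EuclideanSpace ℝ (Fin d) → ℝ)
    (hg : ∀ x, g x = Real.tanh (α * Real.log ‖x‖)) :
    ∀ x : EuclideanSpace ℝ (Fin d), x ≠ 0 →
      ‖x‖ ^ (2 * (1 - α)) * ((1 + ‖x‖ ^ (2 * α)) ^ 2 / 4) *
          (euclideanLaplacian g x - 2 * a / ‖x‖ ^ 2 * ⟪x, gradient g x⟫
            - (n - 2) * (2 * α * ‖x‖ ^ (2 * α - 2) / (1 + ‖x‖ ^ (2 * α))) *
              ⟪x, gradient g x⟫) =
        -(n * α ^ 2) * g x := by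
  intro x hx
  -- basic positivity
  have hd3 : (3 : ℝ) ≤ (d : ℝ) := by exact_mod_cast hd
  have hr : 0 < ‖x‖ := norm_pos_iff.mpr hx
  set t : ℝ := ‖x‖ ^ 2 with htdef
  have ht : 0 < t := by positivity
  set h : ℝ → ℝ := fun s => Real.tanh (α / 2 * Real.log s) with hhdef
  set h1 : ℝ → ℝ := fun s => α / (2 * s) / Real.cosh (α / 2 * Real.log s) ^ 2 with hh1def
  set h2v : ℝ := -(α / (2 * t ^ 2)) / Real.cosh (α / 2 * Real.log t) ^ 2
      * (1 + α * Real.tanh (α / 2 * Real.log t)) with hh2def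
  -- g equals h ∘ sq-norm
  have hgh : g = fun z => h (‖z‖ ^ 2) := by
    funext z
    rw [hg, hhdef]
    simp only
    rw [Real.log_pow]
    norm_num
    ring_nf
  have hNsq : ∀ y : EuclideanSpace ℝ (Fin d),
      HasFDerivAt (fun z : EuclideanSpace ℝ (Fin d) => ‖z‖ ^ 2) (2 • (innerSL ℝ y)) y :=
    fun y => (hasStrictFDerivAt_norm_sq y).hasFDerivAt
  -- first derivative of g
  have hgF : ∀ y : EuclideanSpace ℝ (Fin d), y ≠ 0 →
      HasFDerivAt g ((2 * h1 (‖y‖ ^ 2)) • innerSL ℝ y) y := by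
    intro y hy
    have hyn : ‖y‖ ≠ 0 := norm_ne_zero_iff.mpr hy
    have hty : (0:ℝ) < ‖y‖ ^ 2 := by positivity
    have := (hA α (‖y‖ ^ 2) hty).comp_hasFDerivAt y (hNsq y)
    rw [hgh]
    refine this.congr_fderiv ?_
    ext z
    simp [hh1def, two_smul]
    ring
  -- gradient
  have hgrad : gradient g x = (2 * h1 t) • x := by
    have hG : HasGradientAt g ((2 * h1 t) • x) x := by
      rw [hasGradientAt_iff_hasFDerivAt]
      refine (hgF x hx).congr_fderiv ?_
      ext z
      simp [InnerProductSpace.toDual_apply_apply, real_inner_smul_left]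
      exact Or.inl rfl
    exact hG.gradient
  have hinner : ⟪x, gradient g x⟫ = 2 * h1 t * t := by
    rw [hgrad, real_inner_smul_right, real_inner_self_eq_norm_sq]
  -- Laplacian
  set e : Fin d → EuclideanSpace ℝ (Fin d) := fun i => EuclideanSpace.single i 1 with hedef
  have hlapi : ∀ i : Fin d,
      fderiv ℝ (fun y => fderiv ℝ g y (e i)) x (e i)
        = 2 * (x i * (h2v * (2 * (x i))) + h1 t * 1) := by
    intro i
    have hu : HasFDerivAt (fun y : EuclideanSpace ℝ (Fin d) => h1 (‖y‖ ^ 2))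
        (h2v • (2 • innerSL ℝ x)) x := by
      have := (hB α t ht).comp_hasFDerivAt x (hNsq x)
      exact this
    have hv : HasFDerivAt (fun y : EuclideanSpace ℝ (Fin d) => ⟪y, e i⟫)
        (innerSL ℝ (e i)) x := by
      have h0 := (innerSL ℝ (e i)).hasFDerivAt (x := x)
      exact h0.congr_of_eventuallyEq (by
        filter_upwards with z
        simp [real_inner_comm])
    have hprod := (hu.mul hv).const_mul (2 : ℝ)
    have heq : (fun y => fderiv ℝ g y (e i))
        =ᶠ[nhds x] (fun y => 2 * (h1 (‖y‖ ^ 2) * ⟪y, e i⟫)) := by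
      filter_upwards [eventually_ne_nhds hx] with y hy
      rw [(hgF y hy).fderiv]
      simp
      ring
    rw [heq.fderiv_eq, HasFDerivAt.fderiv (f := fun y => 2 * (h1 (‖y‖ ^ 2) * ⟪y, e i⟫)) hprod]
    have hxi : ⟪x, e i⟫ = x i := by
      simp [hedef, EuclideanSpace.inner_single_right]
    have hei : ⟪e i, e i⟫ = (1:ℝ) := by
      simp [hedef, EuclideanSpace.inner_single_right, EuclideanSpace.single_apply]
    simp only [ContinuousLinearMap.smul_apply, ContinuousLinearMap.add_apply,
      innerSL_apply_apply, smul_eq_mul]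
    rw [hxi, hei, ← htdef]
    ring_nf
  have hsum : ∑ i : Fin d, (x i) * (x i) = t := by
    rw [htdef, ← real_inner_self_eq_norm_sq]
    simp [PiLp.inner_apply, RCLike.inner_apply]
    rw [EuclideanSpace.norm_sq_eq]
    exact Finset.sum_congr rfl fun i _ => by rw [Real.norm_eq_abs, sq_abs, sq]
  have hlap : euclideanLaplacian g x = 4 * h2v * t + 2 * (d : ℝ) * h1 t := by
    unfold euclideanLaplacian
    rw [Finset.sum_congr rfl (fun i _ => hlapi i)]
    calc ∑ i : Fin d, 2 * (x i * (h2v * (2 * x i)) + h1 t * 1)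
        = ∑ i : Fin d, (4 * h2v * (x i * x i) + 2 * h1 t) :=
          Finset.sum_congr rfl fun i _ => by ring
      _ = 4 * h2v * ∑ i : Fin d, x i * x i + (d : ℝ) * (2 * h1 t) := by
          rw [Finset.sum_add_distrib, ← Finset.mul_sum, Finset.sum_const, Finset.card_univ,
            Fintype.card_fin]
          simp [nsmul_eq_mul]
      _ = 4 * h2v * t + 2 * (d : ℝ) * h1 t := by rw [hsum]; ring
  -- scalar identity from the parameter definitions
  have h1ab : (0:ℝ) < 1 + a - b := by linarith
  have hden : (0:ℝ) < ((d : ℝ) - 2) / 2 - a + b := by linarith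
  have h1ab' : (1 + a - b) ≠ 0 := ne_of_gt h1ab
  have hden' : ((d : ℝ) - 2) / 2 - a + b ≠ 0 := ne_of_gt hden
  have hkey : (n - 2) * α = (d : ℝ) - 2 - 2 * a := by
    have hn2 : n - 2 = 2 * (((d : ℝ) - 2) / 2 - a + b) / (1 + a - b) := by
      rw [hn]; field_simp; ring
    rw [hn2, hα, div_mul_div_comm, div_eq_iff (mul_ne_zero h1ab' hden')]
    ring
  have hd2a : (d : ℝ) = (n - 2) * α + 2 + 2 * a := by linarith
  -- final computation
  have harg : α / 2 * Real.log t = α * Real.log ‖x‖ := by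
    rw [htdef, Real.log_pow]; push_cast; ring
  set X : ℝ := Real.exp (α * Real.log ‖x‖) with hXdef
  have hX : 0 < X := Real.exp_pos _
  have hc2 : ‖x‖ ^ (2 * α) = X ^ 2 := by
    rw [Real.rpow_def_of_pos hr,
      show Real.log ‖x‖ * (2 * α) = α * Real.log ‖x‖ + α * Real.log ‖x‖ by ring,
      Real.exp_add, hXdef, sq]
  have hc1 : ‖x‖ ^ (2 * (1 - α)) = t / X ^ 2 := by
    rw [Real.rpow_def_of_pos hr,
      show Real.log ‖x‖ * (2 * (1 - α))
        = (Real.log ‖x‖ + Real.log ‖x‖) - (α * Real.log ‖x‖ + α * Real.log ‖x‖) by ring,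
      Real.exp_sub, Real.exp_add, Real.exp_add, Real.exp_log hr, hXdef, htdef]
    ring
  have hc3 : ‖x‖ ^ (2 * α - 2) = X ^ 2 / t := by
    rw [Real.rpow_def_of_pos hr,
      show Real.log ‖x‖ * (2 * α - 2)
        = (α * Real.log ‖x‖ + α * Real.log ‖x‖) - (Real.log ‖x‖ + Real.log ‖x‖) by ring,
      Real.exp_sub, Real.exp_add, Real.exp_add, Real.exp_log hr, hXdef, htdef]
    ring
  rw [hlap, hinner, hg x, hh1def, hh2def]
  simp only
  rw [harg, Real.tanh_eq_sinh_div_cosh, Real.sinh_eq, Real.cosh_eq, Real.exp_neg,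
    hc1, hc2, hc3, ← hXdef]
  rw [hd2a]
  have hXne : X ≠ 0 := ne_of_gt hX
  have hXi : 0 < X + X⁻¹ := by positivity
  have hXine : X + X⁻¹ ≠ 0 := ne_of_gt hXi
  have h1X : (1:ℝ) + X ^ 2 ≠ 0 := by positivity
  have htne : t ≠ 0 := ne_of_gt ht
  field_simp
  ring
end

section
/- Let d ≥ 3 be an integer, a_c = (d−2)/2, and let (a,b) ∈ ℝ² satisfy a ≤ b < a+1 and a < a_c. Set n = d/(1+a−b) and α = (a_c−a)(a+1−b)/(a_c−a+b), so α > 0 and n ≥ d > 2. Let λ, μ ∈ ℝ with λ² − μ² = 1, and define f(x) = λ + μ tanh(α ln|x|) for x ∈ ℝ^d∖{0}. Then, with L̄f(x) = |x|^{2(1−α)} ((1+|x|^{2α})²/4) [ Δf(x) − (2a/|x|²) x·∇f(x) − (n−2)(2α|x|^{2α−2}/(1+|x|^{2α})) x·∇f(x) ] and Γ̄(f)(x) = |x|^{2(1−α)} ((1+|x|^{2α})²/4) |∇f(x)|², the following pointwise identity holds on ℝ^d∖{0}: f·L̄f − (n/2) Γ̄(f) = (nα²/2)(1 − f²). -/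
open MeasureTheory Real
open scoped RealInnerProductSpace

lemma psi_hasDerivAt (lam mu α s : ℝ) (hs : 0 < s) :
    HasDerivAt (fun t : ℝ => lam + mu * ((t ^ α - 1) / (t ^ α + 1)))
      (2 * mu * α * s ^ α / (s * (s ^ α + 1) ^ 2)) s := by
  have hA : HasDerivAt (fun t : ℝ => t ^ α) (α * s ^ α / s) s := by
    have := Real.hasDerivAt_rpow_const (x := s) (p := α) (Or.inl hs.ne')
    rwa [Real.rpow_sub hs, Real.rpow_one, ← mul_div_assoc] at this
  have hApos : 0 < s ^ α := Real.rpow_pos_of_pos hs α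
  have hden : s ^ α + 1 ≠ 0 := by positivity
  have hdiv := ((hA.sub_const 1).div (hA.add_const 1) hden)
  have := (hdiv.const_mul mu).const_add lam
  refine this.congr_deriv ?_
  field_simp
  ring

lemma CC_hasDerivAt (mu α s : ℝ) (hs : 0 < s) :
    HasDerivAt (fun t : ℝ => 4 * mu * α * t ^ α / (t * (t ^ α + 1) ^ 2))
      ((4 * mu * α * (α * s ^ α / s) * (s * (s ^ α + 1) ^ 2)
          - 4 * mu * α * s ^ α * ((s ^ α + 1) ^ 2 + 2 * α * s ^ α * (s ^ α + 1)))
        / (s * (s ^ α + 1) ^ 2) ^ 2) s := by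
  have hA : HasDerivAt (fun t : ℝ => t ^ α) (α * s ^ α / s) s := by
    have := Real.hasDerivAt_rpow_const (x := s) (p := α) (Or.inl hs.ne')
    rwa [Real.rpow_sub hs, Real.rpow_one, ← mul_div_assoc] at this
  have hApos : 0 < s ^ α := Real.rpow_pos_of_pos hs α
  have hnum : HasDerivAt (fun t : ℝ => 4 * mu * α * t ^ α) (4 * mu * α * (α * s ^ α / s)) s :=
    hA.const_mul _
  have hden : HasDerivAt (fun t : ℝ => t * (t ^ α + 1) ^ 2)
      (1 * (s ^ α + 1) ^ 2 + s * (2 * (s ^ α + 1) ^ 1 * (α * s ^ α / s))) s :=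
    (hasDerivAt_id s).mul ((hA.add_const 1).pow 2)
  have hdne : s * (s ^ α + 1) ^ 2 ≠ 0 := by positivity
  have := hnum.div hden hdne
  have harr : 1 * (s ^ α + 1) ^ 2 + s * (2 * (s ^ α + 1) ^ 1 * (α * s ^ α / s))
      = (s ^ α + 1) ^ 2 + 2 * α * s ^ α * (s ^ α + 1) := by
    field_simp
  rwa [harr] at this

lemma tanh_log_eq (α r : ℝ) (hr : 0 < r) :
    Real.tanh (α * Real.log r) = (((r ^ 2 : ℝ)) ^ α - 1) / (((r ^ 2 : ℝ)) ^ α + 1) := by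
  have hA : ((r ^ 2 : ℝ)) ^ α = Real.exp (α * Real.log r) ^ 2 := by
    rw [Real.rpow_def_of_pos (by positivity), Real.log_pow]
    rw [show ((2 : ℕ) : ℝ) * Real.log r * α = (2 : ℕ) * (α * Real.log r) by push_cast; ring,
      Real.exp_nat_mul]
  set E := Real.exp (α * Real.log r) with hE_def
  have hE : 0 < E := Real.exp_pos _
  have h1 : E + E⁻¹ ≠ 0 := by positivity
  have h2 : E ^ 2 + 1 ≠ 0 := by positivity
  rw [hA, Real.tanh_eq_sinh_div_cosh, Real.sinh_eq, Real.cosh_eq, Real.exp_neg]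
  rw [div_div_div_cancel_right₀]
  · field_simp
    ring
  · norm_num

lemma grad_aux {d : ℕ} (lam mu α : ℝ) (f : EuclideanSpace ℝ (Fin d) → ℝ)
    (hf : ∀ x, f x = lam + mu * Real.tanh (α * Real.log ‖x‖))
    (y : EuclideanSpace ℝ (Fin d)) (hy : y ≠ 0) :
    HasGradientAt f
      ((4 * mu * α * ((‖y‖ ^ 2 : ℝ)) ^ α / ((‖y‖ ^ 2) * (((‖y‖ ^ 2 : ℝ)) ^ α + 1) ^ 2)) • y) y := by
  have hry : (0 : ℝ) < ‖y‖ := norm_pos_iff.mpr hy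
  have hs : (0 : ℝ) < ‖y‖ ^ 2 := by positivity
  have hψ := psi_hasDerivAt lam mu α _ hs
  have hq := (hasStrictFDerivAt_norm_sq y).hasFDerivAt
  have hcomp := hψ.comp_hasFDerivAt y hq
  have heq : f =ᶠ[nhds y]
      fun z => lam + mu * (((‖z‖ ^ 2 : ℝ) ^ α - 1) / ((‖z‖ ^ 2 : ℝ) ^ α + 1)) := by
    filter_upwards [isOpen_compl_singleton.mem_nhds hy] with z hz
    have hz' : (0 : ℝ) < ‖z‖ := norm_pos_iff.mpr hz
    rw [hf, tanh_log_eq α ‖z‖ hz']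
  have hF := hcomp.congr_of_eventuallyEq heq
  rw [hasGradientAt_iff_hasFDerivAt]
  refine hF.congr_fderiv ?_
  refine ContinuousLinearMap.ext fun v => ?_
  simp [InnerProductSpace.toDual_apply_apply, real_inner_smul_left]
  ring

lemma ckn_algebra (dR n α a lam mu s A CC CP fx : ℝ) (hs : s ≠ 0) (hA : A ≠ 0)
    (hA1 : A + 1 ≠ 0)
    (hCC : CC = 4 * mu * α * A / (s * (A + 1) ^ 2))
    (hCP : CP = (4 * mu * α * (α * A / s) * (s * (A + 1) ^ 2)
        - 4 * mu * α * A * ((A + 1) ^ 2 + 2 * α * A * (A + 1))) / (s * (A + 1) ^ 2) ^ 2)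
    (hfx : fx = lam + mu * ((A - 1) / (A + 1)))
    (hd : dR = (n - 2) * α + 2 + 2 * a)
    (hnorm : lam ^ 2 - mu ^ 2 = 1) :
    fx * (s / A * ((1 + A) ^ 2 / 4) *
        ((dR * CC + 2 * CP * s) - 2 * a / s * (CC * s)
          - (n - 2) * (2 * α * (A / s) / (1 + A)) * (CC * s)))
      - n / 2 * (s / A * ((1 + A) ^ 2 / 4) * (CC ^ 2 * s))
    = n * α ^ 2 / 2 * (1 - fx ^ 2) := by
  rw [show (1 : ℝ) - fx ^ 2 = (lam ^ 2 - mu ^ 2) - fx ^ 2 by rw [hnorm]]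
  subst hCC hCP hfx hd
  have h1A : (1 + A) ≠ 0 := by rwa [add_comm]
  field_simp
  ring

/-- For f = λ + μ tanh(α ln|x|) with λ² - μ² = 1, one has the pointwise identity
f·L̄f - (n/2)Γ̄(f) = (nα²/2)(1 - f²) on the spherical CKN space. -/
theorem spherical_ckn_extremal_identity (d : ℕ) (hd : 3 ≤ d) (a b n α lam mu : ℝ)
    (hab : a ≤ b) (hba : b < a + 1) (ha : a < ((d : ℝ) - 2) / 2)
    (hn : n = (d : ℝ) / (1 + a - b))
    (hα : α = (((d : ℝ) - 2) / 2 - a) * (a + 1 - b) / (((d : ℝ) - 2) / 2 - a + b))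
    (hnorm : lam ^ 2 - mu ^ 2 = 1)
    (f : EuclideanSpace ℝ (Fin d) → ℝ)
    (hf : ∀ x, f x = lam + mu * Real.tanh (α * Real.log ‖x‖)) :
    ∀ x : EuclideanSpace ℝ (Fin d), x ≠ 0 →
      f x * (‖x‖ ^ (2 * (1 - α)) * ((1 + ‖x‖ ^ (2 * α)) ^ 2 / 4) *
          (euclideanLaplacian f x - 2 * a / ‖x‖ ^ 2 * ⟪x, gradient f x⟫
            - (n - 2) * (2 * α * ‖x‖ ^ (2 * α - 2) / (1 + ‖x‖ ^ (2 * α))) *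
              ⟪x, gradient f x⟫))
        - n / 2 * (‖x‖ ^ (2 * (1 - α)) * ((1 + ‖x‖ ^ (2 * α)) ^ 2 / 4) *
            ‖gradient f x‖ ^ 2) =
      n * α ^ 2 / 2 * (1 - f x ^ 2) := by
  intro x hx
  have hr : (0 : ℝ) < ‖x‖ := norm_pos_iff.mpr hx
  have hs : (0 : ℝ) < ‖x‖ ^ 2 := by positivity
  have hApos : (0 : ℝ) < ((‖x‖ ^ 2 : ℝ)) ^ α := Real.rpow_pos_of_pos hs α
  -- rpow rewrites
  have e2 : ‖x‖ ^ ((2 : ℝ)) = ‖x‖ ^ 2 := by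
    rw [show ((2 : ℝ)) = ((2 : ℕ) : ℝ) by norm_num, Real.rpow_natCast]
  have hrw2 : ‖x‖ ^ (2 * α) = ((‖x‖ ^ 2 : ℝ)) ^ α := by
    rw [← e2, ← Real.rpow_mul hr.le]
  have hrw1 : ‖x‖ ^ (2 * (1 - α)) = ‖x‖ ^ 2 / ((‖x‖ ^ 2 : ℝ)) ^ α := by
    rw [show 2 * (1 - α) = (2 : ℝ) - 2 * α by ring, Real.rpow_sub hr, e2, hrw2]
  have hrw3 : ‖x‖ ^ (2 * α - 2) = ((‖x‖ ^ 2 : ℝ)) ^ α / ‖x‖ ^ 2 := by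
    rw [Real.rpow_sub hr, e2, hrw2]
  -- value of f at x
  have hfx : f x = lam + mu * ((((‖x‖ ^ 2 : ℝ)) ^ α - 1) / (((‖x‖ ^ 2 : ℝ)) ^ α + 1)) := by
    rw [hf, tanh_log_eq α ‖x‖ hr]
  -- gradient facts
  have hgrad := (grad_aux lam mu α f hf x hx).gradient
  have hIP : ⟪x, gradient f x⟫ =
      (4 * mu * α * ((‖x‖ ^ 2 : ℝ)) ^ α / ((‖x‖ ^ 2) * (((‖x‖ ^ 2 : ℝ)) ^ α + 1) ^ 2)) * ‖x‖ ^ 2 := by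
    rw [hgrad, real_inner_smul_right, real_inner_self_eq_norm_sq]
  have hG2 : ‖gradient f x‖ ^ 2 =
      (4 * mu * α * ((‖x‖ ^ 2 : ℝ)) ^ α / ((‖x‖ ^ 2) * (((‖x‖ ^ 2 : ℝ)) ^ α + 1) ^ 2)) ^ 2 * ‖x‖ ^ 2 := by
    rw [hgrad, norm_smul, mul_pow, Real.norm_eq_abs, sq_abs]
  -- Laplacian
  have hterm : ∀ i : Fin d,
      fderiv ℝ (fun z => fderiv ℝ f z (EuclideanSpace.single i 1)) x (EuclideanSpace.single i 1)
      = (4 * mu * α * ((‖x‖ ^ 2 : ℝ)) ^ α / ((‖x‖ ^ 2) * (((‖x‖ ^ 2 : ℝ)) ^ α + 1) ^ 2))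
        + 2 * ((4 * mu * α * (α * ((‖x‖ ^ 2 : ℝ)) ^ α / ‖x‖ ^ 2) * (‖x‖ ^ 2 * (((‖x‖ ^ 2 : ℝ)) ^ α + 1) ^ 2)
          - 4 * mu * α * ((‖x‖ ^ 2 : ℝ)) ^ α * ((((‖x‖ ^ 2 : ℝ)) ^ α + 1) ^ 2
            + 2 * α * ((‖x‖ ^ 2 : ℝ)) ^ α * (((‖x‖ ^ 2 : ℝ)) ^ α + 1)))
          / (‖x‖ ^ 2 * (((‖x‖ ^ 2 : ℝ)) ^ α + 1) ^ 2) ^ 2) * (x i) ^ 2 := by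
    intro i
    have hev : (fun z => fderiv ℝ f z (EuclideanSpace.single i 1)) =ᶠ[nhds x]
        (fun z : EuclideanSpace ℝ (Fin d) =>
          (4 * mu * α * ((‖z‖ ^ 2 : ℝ)) ^ α / ((‖z‖ ^ 2) * (((‖z‖ ^ 2 : ℝ)) ^ α + 1) ^ 2)) * z i) := by
      filter_upwards [isOpen_compl_singleton.mem_nhds hx] with z hz
      rw [((grad_aux lam mu α f hf z hz).hasFDerivAt).fderiv]
      simp [InnerProductSpace.toDual_apply_apply, real_inner_smul_left,
        EuclideanSpace.inner_single_right]
    rw [hev.fderiv_eq]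
    have hC := CC_hasDerivAt mu α (‖x‖ ^ 2) hs
    have hq := (hasStrictFDerivAt_norm_sq x).hasFDerivAt
    have hCcomp := hC.comp_hasFDerivAt x hq
    have hPi : HasFDerivAt (fun z : EuclideanSpace ℝ (Fin d) => z i)
        (EuclideanSpace.proj i : EuclideanSpace ℝ (Fin d) →L[ℝ] ℝ) x :=
      ((EuclideanSpace.proj (𝕜 := ℝ) i).hasFDerivAt (x := x)).congr_of_eventuallyEq
        (Filter.Eventually.of_forall fun z => rfl)
    have hmul := hCcomp.mul hPi
    simp only [Function.comp_def, Pi.mul_def] at hmul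
    rw [hmul.fderiv]
    simp [ContinuousLinearMap.add_apply, ContinuousLinearMap.smul_apply,
      EuclideanSpace.single_apply, real_inner_smul_left,
      EuclideanSpace.inner_single_right, innerSL_apply_apply]
    ring
  have hsum : ∑ i : Fin d, (x i) ^ 2 = ‖x‖ ^ 2 := by
    have h := EuclideanSpace.norm_eq x
    rw [show (‖x‖ : ℝ) ^ 2 = ∑ i, ‖x i‖ ^ 2 by
      rw [h, Real.sq_sqrt (by positivity)]]
    simp [Real.norm_eq_abs, sq_abs]
  have hLap : euclideanLaplacian f x =
      (d : ℝ) * (4 * mu * α * ((‖x‖ ^ 2 : ℝ)) ^ α / ((‖x‖ ^ 2) * (((‖x‖ ^ 2 : ℝ)) ^ α + 1) ^ 2))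
      + 2 * ((4 * mu * α * (α * ((‖x‖ ^ 2 : ℝ)) ^ α / ‖x‖ ^ 2) * (‖x‖ ^ 2 * (((‖x‖ ^ 2 : ℝ)) ^ α + 1) ^ 2)
          - 4 * mu * α * ((‖x‖ ^ 2 : ℝ)) ^ α * ((((‖x‖ ^ 2 : ℝ)) ^ α + 1) ^ 2
            + 2 * α * ((‖x‖ ^ 2 : ℝ)) ^ α * (((‖x‖ ^ 2 : ℝ)) ^ α + 1)))
          / (‖x‖ ^ 2 * (((‖x‖ ^ 2 : ℝ)) ^ α + 1) ^ 2) ^ 2) * ‖x‖ ^ 2 := by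
    unfold euclideanLaplacian
    rw [Finset.sum_congr rfl (fun i _ => hterm i)]
    rw [Finset.sum_add_distrib, Finset.sum_const, ← Finset.mul_sum, hsum]
    simp [Finset.card_univ]
  -- the degree condition
  have hd3 : (3 : ℝ) ≤ (d : ℝ) := by exact_mod_cast hd
  have hdeg : (d : ℝ) = (n - 2) * α + 2 + 2 * a := by
    have h1 : (0 : ℝ) < 1 + a - b := by linarith
    have h2 : (0 : ℝ) < ((d : ℝ) - 2) / 2 - a + b := by linarith
    have hn2 : n - 2 = ((d : ℝ) - 2 - 2 * a + 2 * b) / (1 + a - b) := by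
      rw [hn]
      field_simp
      ring
    have key : (n - 2) * α = (d : ℝ) - 2 - 2 * a := by
      rw [hn2, hα, div_mul_div_comm,
        div_eq_iff (mul_ne_zero h1.ne' h2.ne')]
      ring
    linarith [key]
  rw [hfx, hLap, hIP, hG2, hrw1, hrw3, hrw2]
  exact ckn_algebra (d : ℝ) n α a lam mu (‖x‖ ^ 2) (((‖x‖ ^ 2 : ℝ)) ^ α) _ _ _
    hs.ne' hApos.ne' (by positivity) rfl rfl rfl hdeg hnorm
end

section
/- Let d ≥ 3 be an integer, a_c = (d−2)/2, and let (a,b) ∈ ℝ² satisfy a ≤ b < a+1 and a < a_c. Set n = d/(1+a−b) and α = (a_c−a)(a+1−b)/(a_c−a+b), so α > 0 and n ≥ d > 2. Let λ > 0 and μ ∈ ℝ with λ² − μ² = 1, set f(x) = λ + μ tanh(α ln|x|), and define v = f^{−(n−2)/2} on ℝ^d∖{0}. Then, with L̄v(x) = |x|^{2(1−α)} ((1+|x|^{2α})²/4) [ Δv(x) − (2a/|x|²) x·∇v(x) − (n−2)(2α|x|^{2α−2}/(1+|x|^{2α})) x·∇v(x) ], the function v satisfies the Yamabe-type equation −(4/(n(n−2)α²))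 L̄v + v = v^{(n+2)/(n−2)} pointwise on ℝ^d∖{0}. -/
open MeasureTheory Real
open scoped RealInnerProductSpace

section Aux

/-- tanh in terms of exp of the doubled argument. -/
lemma tanh_eq_exp_two_mul (t : ℝ) :
    Real.tanh t = (Real.exp (2 * t) - 1) / (Real.exp (2 * t) + 1) := by
  rw [Real.tanh_eq_sinh_div_cosh, Real.sinh_eq, Real.cosh_eq, Real.exp_neg, two_mul,
    Real.exp_add]
  have h := Real.exp_ne_zero t
  have h2 : (0:ℝ) < Real.exp t * Real.exp t + 1 := by positivity
  field_simp

lemma f_pos (lam mu T : ℝ) (hlam : 0 < lam) (hnorm : lam ^ 2 - mu ^ 2 = 1)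
    (h1 : -1 < T) (h2 : T < 1) : 0 < lam + mu * T := by
  by_contra hc
  push_neg at hc
  have h3 : 0 < lam - mu * T := by nlinarith
  have h4 : 0 ≤ 1 - T ^ 2 := by nlinarith
  nlinarith [mul_nonneg (sq_nonneg mu) h4]

/-- First derivative of the radial profile `G(s) = (lam + mu*(s^α-1)/(s^α+1))^c`. -/
lemma hasDerivAt_G (α c lam mu s : ℝ) (hs : 0 < s)
    (hf : 0 < lam + mu * ((s ^ α - 1) / (s ^ α + 1))) :
    HasDerivAt (fun t : ℝ => (lam + mu * ((t ^ α - 1) / (t ^ α + 1))) ^ c)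
      (c * (lam + mu * ((s ^ α - 1) / (s ^ α + 1))) ^ (c - 1) *
        (2 * mu * α * s ^ α / (s * (s ^ α + 1) ^ 2))) s := by
  have hu : HasDerivAt (fun t : ℝ => t ^ α) (α * s ^ α / s) s := by
    have h := Real.hasDerivAt_rpow_const (x := s) (p := α) (Or.inl hs.ne')
    convert h using 1
    rw [Real.rpow_sub hs, Real.rpow_one]
    ring
  have hd : (0:ℝ) < s ^ α + 1 := by positivity
  have hq := (hu.sub_const 1).div (hu.add_const 1) hd.ne'
  have hf' := (hq.const_mul mu).const_add lam
  have hg := hf'.rpow_const (p := c) (Or.inl hf.ne')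
  convert hg using 1
  simp only [Pi.div_apply]
  generalize (lam + mu * ((s ^ α - 1) / (s ^ α + 1))) ^ (c - 1) = P
  field_simp
  ring

/-- Second derivative of the radial profile. -/
lemma hasDerivAt_G1_s17 (α c lam mu s : ℝ) (hs : 0 < s)
    (hf : 0 < lam + mu * ((s ^ α - 1) / (s ^ α + 1))) :
    HasDerivAt (fun t : ℝ =>
        c * (lam + mu * ((t ^ α - 1) / (t ^ α + 1))) ^ (c - 1) *
          (2 * mu * α * t ^ α / (t * (t ^ α + 1) ^ 2)))
      (2 * c * mu * α *
        ((c - 1) * (lam + mu * ((s ^ α - 1) / (s ^ α + 1))) ^ (c - 2) *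
            (2 * mu * α * (s ^ α) ^ 2 / (s ^ 2 * (s ^ α + 1) ^ 4)) +
          (lam + mu * ((s ^ α - 1) / (s ^ α + 1))) ^ (c - 1) *
            ((α * s ^ α * (s ^ α + 1) - s ^ α * (s ^ α + 1) - 2 * α * (s ^ α) ^ 2) /
              (s ^ 2 * (s ^ α + 1) ^ 3)))) s := by
  have hu : HasDerivAt (fun t : ℝ => t ^ α) (α * s ^ α / s) s := by
    have h := Real.hasDerivAt_rpow_const (x := s) (p := α) (Or.inl hs.ne')
    convert h using 1
    rw [Real.rpow_sub hs, Real.rpow_one]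
    ring
  have hd : (0:ℝ) < s ^ α + 1 := by positivity
  have hq := (hu.sub_const 1).div (hu.add_const 1) hd.ne'
  have hf' := (hq.const_mul mu).const_add lam
  have h1 := hf'.rpow_const (p := c - 1) (Or.inl hf.ne')
  have hnum := hu.const_mul (2 * mu * α)
  have hden := (hasDerivAt_id s).mul ((hu.add_const 1).pow 2)
  have hw : (0:ℝ) < s * (s ^ α + 1) ^ 2 := by positivity
  have hquot := hnum.div hden (by simpa using hw.ne')
  have htot := (h1.mul hquot).const_mul c
  convert htot using 1
  · rfl
  · rfl
  · funext t
    simp only [id_eq, Pi.mul_apply, Pi.div_apply, Pi.pow_apply]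
    ring
  · have e0 : c - 1 - 1 = c - 2 := by ring
    rw [e0]
    simp only [id_eq, Pi.mul_apply, Pi.div_apply, Pi.pow_apply]
    generalize (lam + mu * ((s ^ α - 1) / (s ^ α + 1))) ^ (c - 1) = P
    generalize (lam + mu * ((s ^ α - 1) / (s ^ α + 1))) ^ (c - 2) = Q
    field_simp
    ring


set_option maxHeartbeats 1000000 in
lemma key_id (n a α lam mu s u f P : ℝ) (hf : f = lam + mu * ((u - 1) / (u + 1)))
    (hs : s ≠ 0) (hu : u ≠ 0) (hu1 : u + 1 ≠ 0)
    (hn0 : n ≠ 0) (hm0 : n - 2 ≠ 0) (hα0 : α ≠ 0) :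
    -(4 / (n * (n - 2) * α ^ 2)) *
        (s / u * ((1 + u) ^ 2 / 4) *
          (2 * (α * (n - 2) + 2 * a + 2) *
              (-((n - 2) / 2) * (P * f) * (2 * mu * α * u / (s * (u + 1) ^ 2)))
              + 4 * (2 * -((n - 2) / 2) * mu * α *
                ((-((n - 2) / 2) - 1) * P * (2 * mu * α * u ^ 2 / (s ^ 2 * (u + 1) ^ 4)) +
                  P * f * ((α * u * (u + 1) - u * (u + 1) - 2 * α * u ^ 2) /
                    (s ^ 2 * (u + 1) ^ 3)))) * s
            - 2 * a / s * (-((n - 2) / 2) * (P * f) * (2 * mu * α * u / (s * (u + 1) ^ 2)) * (2 * s))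
            - (n - 2) * (2 * α * (u / s) / (1 + u)) *
                (-((n - 2) / 2) * (P * f) * (2 * mu * α * u / (s * (u + 1) ^ 2)) * (2 * s))))
      + P * f ^ 2 = P * (lam ^ 2 - mu ^ 2) := by
  have h1u : (1:ℝ) + u ≠ 0 := by rw [add_comm]; exact hu1
  set T : ℝ := (u - 1) / (u + 1) with hT
  have h1T : 1 - T = 2 / (u + 1) := by rw [hT]; field_simp; ring
  have h2T : 1 + T = 2 * u / (u + 1) := by rw [hT]; field_simp; ring
  have hT1 : 1 - T ≠ 0 := by rw [h1T]; positivity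
  have hT2 : 1 + T ≠ 0 := by
    rw [h2T]
    exact div_ne_zero (mul_ne_zero two_ne_zero hu) hu1
  have hTsq : 1 - T ^ 2 ≠ 0 := by
    have : 1 - T ^ 2 = (1 - T) * (1 + T) := by ring
    rw [this]; exact mul_ne_zero hT1 hT2
  have hsq : 1 - T ^ 2 = (1 - T) * (1 + T) := by ring
  have E1 : 2 * mu * α * u / (s * (u + 1) ^ 2) = mu * α * (1 - T ^ 2) / (2 * s) := by
    rw [hsq, h1T, h2T]; field_simp
  have E2 : 2 * mu * α * u ^ 2 / (s ^ 2 * (u + 1) ^ 4) = mu * α * (1 - T ^ 2) ^ 2 / (8 * s ^ 2) := by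
    rw [hsq, h1T, h2T]; field_simp; ring
  have E3 : (α * u * (u + 1) - u * (u + 1) - 2 * α * u ^ 2) / (s ^ 2 * (u + 1) ^ 3)
      = -((1 - T ^ 2) * (1 + α * T)) / (4 * s ^ 2) := by
    rw [hsq, h1T, h2T, hT]; field_simp; ring
  have E4 : 2 * α * (u / s) / (1 + u) = α * (1 + T) / s := by
    rw [h2T]; field_simp [h1u]; ring
  have E5 : s / u * ((1 + u) ^ 2 / 4) = s / (1 - T ^ 2) := by
    rw [hsq, h1T, h2T]; field_simp; ring
  have E6 : f = lam + mu * T := by rw [hf, hT]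
  rw [E1, E2, E3, E4, E5, E6]
  field_simp
  ring

end Aux

set_option maxHeartbeats 2000000 in
/-- The extremal function v = (λ + μ tanh(α ln|x|))^{-(n-2)/2} satisfies the
Yamabe-type equation -(4/(n(n-2)α²)) L̄v + v = v^{(n+2)/(n-2)} on the spherical
CKN space. -/
theorem spherical_ckn_yamabe (d : ℕ) (hd : 3 ≤ d) (a b n α lam mu : ℝ)
    (hab : a ≤ b) (hba : b < a + 1) (ha : a < ((d : ℝ) - 2) / 2)
    (hn : n = (d : ℝ) / (1 + a - b))
    (hα : α = (((d : ℝ) - 2) / 2 - a) * (a + 1 - b) / (((d : ℝ) - 2) / 2 - a + b))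
    (hlam : 0 < lam) (hnorm : lam ^ 2 - mu ^ 2 = 1)
    (v : EuclideanSpace ℝ (Fin d) → ℝ)
    (hv : ∀ x, v x =
      (lam + mu * Real.tanh (α * Real.log ‖x‖)) ^ (-((n - 2) / 2))) :
    ∀ x : EuclideanSpace ℝ (Fin d), x ≠ 0 →
      -(4 / (n * (n - 2) * α ^ 2)) *
          (‖x‖ ^ (2 * (1 - α)) * ((1 + ‖x‖ ^ (2 * α)) ^ 2 / 4) *
            (euclideanLaplacian v x - 2 * a / ‖x‖ ^ 2 * ⟪x, gradient v x⟫
              - (n - 2) * (2 * α * ‖x‖ ^ (2 * α - 2) / (1 + ‖x‖ ^ (2 * α))) *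
                ⟪x, gradient v x⟫))
        + v x =
      v x ^ ((n + 2) / (n - 2)) := by
  intro x hx
  -- basic parameter facts
  have hd3 : (3:ℝ) ≤ (d:ℝ) := by exact_mod_cast hd
  have h1ab : 0 < 1 + a - b := by linarith
  have h1ab' : 1 + a - b ≤ 1 := by linarith
  have hn2 : 2 < n := by
    rw [hn, lt_div_iff₀ h1ab]; nlinarith
  have hn0 : n ≠ 0 := by intro h; rw [h] at hn2; norm_num at hn2
  have hm0 : n - 2 ≠ 0 := by intro h; nlinarith
  have hden : 0 < ((d : ℝ) - 2) / 2 - a + b := by nlinarith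
  have hα0 : 0 < α := by
    rw [hα]
    apply div_pos (mul_pos (by linarith) (by linarith)) hden
  have hkey : α * (n - 2) = (d : ℝ) - 2 - 2 * a := by
    have h2 : ((d:ℝ) - 2) / 2 - a + b ≠ 0 := ne_of_gt hden
    have h3 : 1 + a - b ≠ 0 := ne_of_gt h1ab
    have e : n - 2 = ((d:ℝ) - 2 * (1 + a - b)) / (1 + a - b) := by
      rw [hn]; field_simp
    rw [hα, e, div_mul_div_comm, div_eq_iff (mul_ne_zero h2 h3)]
    ring
  have hDcast : (d : ℝ) = α * (n - 2) + 2 * a + 2 := by linarith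
  -- notation
  set r : ℝ := ‖x‖ with hr_def
  have hr : 0 < r := norm_pos_iff.mpr hx
  set s : ℝ := r ^ 2 with hs_def
  have hs : 0 < s := by positivity
  set c : ℝ := -((n - 2) / 2) with hc_def
  set u : ℝ := s ^ α with hu_def
  have hu : 0 < u := Real.rpow_pos_of_pos hs α
  -- positivity of the base, as a function of a positive argument
  have hfpos : ∀ t : ℝ, 0 < t → 0 < lam + mu * ((t ^ α - 1) / (t ^ α + 1)) := by
    intro t ht
    have hu' : 0 < t ^ α := Real.rpow_pos_of_pos ht α
    have h1 : -1 < (t ^ α - 1) / (t ^ α + 1) := by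
      rw [lt_div_iff₀ (by positivity)]; nlinarith
    have h2 : (t ^ α - 1) / (t ^ α + 1) < 1 := by
      rw [div_lt_iff₀ (by positivity)]; nlinarith
    exact f_pos lam mu _ hlam hnorm h1 h2
  set f : ℝ := lam + mu * ((u - 1) / (u + 1)) with hf_def
  have hf : 0 < f := hfpos s hs
  -- the radial profile and its derivatives
  set G : ℝ → ℝ := fun t => (lam + mu * ((t ^ α - 1) / (t ^ α + 1))) ^ c with hG_def
  set G1 : ℝ → ℝ := fun t =>
    c * (lam + mu * ((t ^ α - 1) / (t ^ α + 1))) ^ (c - 1) *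
      (2 * mu * α * t ^ α / (t * (t ^ α + 1) ^ 2)) with hG1_def
  set G2s : ℝ :=
    2 * c * mu * α *
      ((c - 1) * f ^ (c - 2) * (2 * mu * α * u ^ 2 / (s ^ 2 * (u + 1) ^ 4)) +
        f ^ (c - 1) *
          ((α * u * (u + 1) - u * (u + 1) - 2 * α * u ^ 2) /
            (s ^ 2 * (u + 1) ^ 3))) with hG2_def
  -- v agrees with G ∘ (‖·‖^2) away from the origin
  have hpow2 : ∀ y : EuclideanSpace ℝ (Fin d), y ≠ 0 →
      ((‖y‖ ^ 2 : ℝ)) ^ α = ‖y‖ ^ (2 * α) := by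
    intro y hy
    have hy' : 0 < ‖y‖ := norm_pos_iff.mpr hy
    rw [← Real.rpow_natCast ‖y‖ 2, ← Real.rpow_mul hy'.le]
    norm_num
  have htanh : ∀ y : EuclideanSpace ℝ (Fin d), y ≠ 0 →
      Real.tanh (α * Real.log ‖y‖)
        = ((‖y‖ ^ 2 : ℝ) ^ α - 1) / ((‖y‖ ^ 2 : ℝ) ^ α + 1) := by
    intro y hy
    have hy' : 0 < ‖y‖ := norm_pos_iff.mpr hy
    have he : ‖y‖ ^ (2 * α) = Real.exp (2 * (α * Real.log ‖y‖)) := by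
      rw [Real.rpow_def_of_pos hy']
      congr 1
      ring
    rw [hpow2 y hy, he, tanh_eq_exp_two_mul]
  have hvV : ∀ y : EuclideanSpace ℝ (Fin d), y ≠ 0 → v y = G (‖y‖ ^ 2) := by
    intro y hy
    rw [hv y, htanh y hy]
  have hne : ∀ᶠ y in nhds x, y ≠ (0 : EuclideanSpace ℝ (Fin d)) :=
    eventually_ne_nhds hx
  have hev : v =ᶠ[nhds x] fun y => G (‖y‖ ^ 2) := by
    filter_upwards [hne] with y hy using hvV y hy
  -- Fréchet derivative of v on the punctured space
  have hVfd : ∀ y : EuclideanSpace ℝ (Fin d), y ≠ 0 →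
      HasFDerivAt v ((G1 (‖y‖ ^ 2)) • ((2:ℕ) • (innerSL ℝ y))) y := by
    intro y hy
    have hy' : 0 < ‖y‖ := norm_pos_iff.mpr hy
    have hs' : 0 < (‖y‖ ^ 2 : ℝ) := by positivity
    have hG' : HasDerivAt G (G1 (‖y‖ ^ 2)) (‖y‖ ^ 2) :=
      hasDerivAt_G α c lam mu _ hs' (hfpos _ hs')
    have hq : HasFDerivAt (fun z : EuclideanSpace ℝ (Fin d) => ‖z‖ ^ 2)
        ((2:ℕ) • (innerSL ℝ y)) y := (hasStrictFDerivAt_norm_sq y).hasFDerivAt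
    have := hG'.comp_hasFDerivAt y hq
    refine HasFDerivAt.congr_of_eventuallyEq this ?_
    filter_upwards [eventually_ne_nhds hy] with z hz using hvV z hz
  -- first partial derivatives
  have hfd1 : ∀ (y : EuclideanSpace ℝ (Fin d)), y ≠ 0 → ∀ i : Fin d,
      fderiv ℝ v y (EuclideanSpace.single i 1) = G1 (‖y‖ ^ 2) * (2 * y i) := by
    intro y hy i
    rw [(hVfd y hy).fderiv]
    simp only [ContinuousLinearMap.smul_apply, innerSL_apply_apply, smul_eq_mul,
      EuclideanSpace.inner_single_right, map_one, starRingEnd_apply, star_trivial,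
      nsmul_eq_mul, Nat.cast_ofNat]
    ring
  -- second partial derivatives
  have hfd2 : ∀ i : Fin d,
      fderiv ℝ (fun y => fderiv ℝ v y (EuclideanSpace.single i 1)) x
          (EuclideanSpace.single i 1)
        = G1 s * 2 + (2 * x i) * (G2s * (2 * x i)) := by
    intro i
    have hev2 : (fun y => fderiv ℝ v y (EuclideanSpace.single i 1))
        =ᶠ[nhds x] fun y => G1 (‖y‖ ^ 2) * (2 * y i) := by
      filter_upwards [hne] with y hy using hfd1 y hy i
    have hA : HasFDerivAt (fun y : EuclideanSpace ℝ (Fin d) => G1 (‖y‖ ^ 2))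
        (G2s • ((2:ℕ) • (innerSL ℝ x))) x := by
      have hG2' : HasDerivAt G1 G2s s := by
        have := hasDerivAt_G1_s17 α c lam mu s hs hf
        simpa [hG1_def, hG2_def, hu_def, hf_def] using this
      have hq : HasFDerivAt (fun z : EuclideanSpace ℝ (Fin d) => ‖z‖ ^ 2)
          ((2:ℕ) • (innerSL ℝ x)) x := (hasStrictFDerivAt_norm_sq x).hasFDerivAt
      exact hG2'.comp_hasFDerivAt x hq
    have hB : HasFDerivAt (fun y : EuclideanSpace ℝ (Fin d) => 2 * y i)
        ((2:ℝ) • (EuclideanSpace.proj (𝕜 := ℝ) i)) x :=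
      ((EuclideanSpace.proj (𝕜 := ℝ) i).hasFDerivAt (x := x)).const_mul (2:ℝ)
    have hPi : HasFDerivAt (fun y : EuclideanSpace ℝ (Fin d) => G1 (‖y‖ ^ 2) * (2 * y i)) _ x := hA.mul hB
    rw [hev2.fderiv_eq, hPi.fderiv]
    have hxs : (‖x‖ ^ 2 : ℝ) = s := by rw [hs_def, hr_def]
    simp only [ContinuousLinearMap.add_apply, ContinuousLinearMap.smul_apply,
      innerSL_apply_apply, smul_eq_mul, EuclideanSpace.inner_single_right, map_one,
      starRingEnd_apply, star_trivial, nsmul_eq_mul, Nat.cast_ofNat,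
      PiLp.proj_apply, EuclideanSpace.single_apply, eq_self_iff_true, if_true, hxs]
    ring
  -- sum: the Laplacian
  have hsumsq : ∑ i : Fin d, (x i) ^ 2 = s := by
    rw [hs_def, hr_def, EuclideanSpace.norm_eq, Real.sq_sqrt (by positivity)]
    simp [sq_abs]
  have hlap : euclideanLaplacian v x = 2 * (d:ℝ) * G1 s + 4 * G2s * s := by
    rw [euclideanLaplacian]
    rw [Finset.sum_congr rfl fun i _ => hfd2 i]
    rw [Finset.sum_add_distrib, Finset.sum_const, Finset.card_univ, Fintype.card_fin]
    have : ∑ i : Fin d, (2 * x i) * (G2s * (2 * x i)) = 4 * G2s * ∑ i : Fin d, (x i) ^ 2 := by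
      rw [Finset.mul_sum]
      exact Finset.sum_congr rfl fun i _ => by ring
    rw [this, hsumsq]
    push_cast
    ring
  -- the gradient term
  have hgrad : ⟪x, gradient v x⟫ = G1 s * (2 * s) := by
    have hgr : HasGradientAt v ((2 * G1 s) • x) x := by
      rw [hasGradientAt_iff_hasFDerivAt]
      convert hVfd x hx using 1
      · rfl
      · rfl
      ext y
      simp [InnerProductSpace.toDual_apply_apply, inner_smul_left, real_inner_comm]
      ring
    rw [hgr.gradient, real_inner_smul_right, real_inner_self_eq_norm_sq]
    ring
  -- rewrite the norm powers
  have hpows : r ^ (2 * α) = u := by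
    rw [hu_def, hs_def, ← Real.rpow_two, ← Real.rpow_mul hr.le]
  have hpow1α : r ^ (2 * (1 - α)) = s / u := by
    have h0 : r ^ (2 * (1 - α)) = r ^ ((2:ℝ)) / r ^ (2 * α) := by
      rw [← Real.rpow_sub hr]
      congr 1
      ring
    rw [h0, Real.rpow_two, hpows, ← hs_def]
  have hpowm : r ^ (2 * α - 2) = u / s := by
    have h0 : r ^ (2 * α - 2) = r ^ (2 * α) / r ^ ((2:ℝ)) := by
      rw [← Real.rpow_sub hr]
    rw [h0, Real.rpow_two, hpows, ← hs_def]
  -- rewrite v x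
  have hvx : v x = f ^ c := by rw [hvV x hx]
  -- right-hand side
  have hcexp : c * ((n + 2) / (n - 2)) = c - 2 := by
    rw [hc_def]; field_simp; ring
  have hrhs : v x ^ ((n + 2) / (n - 2)) = f ^ (c - 2) := by
    have h0 := (Real.rpow_mul hf.le c ((n + 2) / (n - 2))).symm
    rw [hcexp] at h0
    rw [hvx]
    exact h0
  -- assemble
  rw [hlap, hgrad, hpows, hpow1α, hpowm, hrhs, hvx, hDcast]
  have hG1s : G1 s = c * f ^ (c - 1) * (2 * mu * α * u / (s * (u + 1) ^ 2)) := rfl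
  rw [hG1s, hG2_def]
  have e1 : f ^ c = f ^ (c - 2) * f ^ 2 := by
    have h0 := Real.rpow_add hf (c - 2) 2
    rw [Real.rpow_two] at h0
    rw [show c - 2 + 2 = c by ring] at h0
    exact h0
  have e2 : f ^ (c - 1) = f ^ (c - 2) * f := by
    have h0 := Real.rpow_add hf (c - 2) 1
    rw [Real.rpow_one] at h0
    rw [show c - 2 + 1 = c - 1 by ring] at h0
    exact h0
  rw [e1, e2]
  have K := key_id n a α lam mu s u f (f ^ (c - 2)) hf_def hs.ne' hu.ne'
    (ne_of_gt (by linarith : (0:ℝ) < u + 1)) hn0 hm0 hα0.ne'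
  rw [hnorm, mul_one] at K
  exact K
end
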